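/- arXiv:1407.5235 — 7 statements merged into one kernel-verified Lean document; each statement's English description precedes it below -/
import Mathlib

section
/- Let G be a finite bipartite simple graph. Then θ_c(G) ≤ α(G), i.e., G admits a neo-colonization of total weight at most the independence number of G. -/
variable {V : Type*}

/-- `D` is a dominating set of `G`: every vertex outside `D` has a neighbor in `D`. -/
def Dominates (G : SimpleGraph V) (D : Finset V) : Prop :=
  ∀ v : V, v ∉ D → ∃ u ∈ D, G.Adj u v

/-- The domination number `γ(G)`. -/
noncomputable def domNum (G : SimpleGraph V) : ℕ :=
  sInf {k | ∃ D : Finset V, Dominates G D ∧ D.card = k}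

/-- An eternal guard family of size `k` in `G`. -/
def IsEternalGuardFamily [DecidableEq V] (G : SimpleGraph V) (k : ℕ)
    (F : Set (Finset V)) : Prop :=
  F.Nonempty ∧ (∀ D ∈ F, Dominates G D ∧ D.card = k) ∧
    ∀ D ∈ F, ∀ r : V, r ∉ D → ∃ v ∈ D, G.Adj v r ∧ insert r (D.erase v) ∈ F

/-- The eternal domination number `γ^∞(G)`. -/
noncomputable def eternalDomNum [DecidableEq V] (G : SimpleGraph V) : ℕ :=
  sInf {k | 1 ≤ k ∧ ∃ F : Set (Finset V), IsEternalGuardFamily G k F}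

/-- An m-eternal guard family of size `k` in `G`. -/
def IsMEternalGuardFamily (G : SimpleGraph V) (k : ℕ) (F : Set (Finset V)) : Prop :=
  F.Nonempty ∧ (∀ D ∈ F, Dominates G D ∧ D.card = k) ∧
    ∀ D ∈ F, ∀ r : V, r ∉ D → ∃ D' ∈ F, r ∈ D' ∧
      ∃ g : V → V, Set.BijOn g ↑D ↑D' ∧ ∀ v ∈ D, g v = v ∨ G.Adj v (g v)

/-- The m-eternal domination number `γ_m^∞(G)`. -/
noncomputable def mEternalDomNum (G : SimpleGraph V) : ℕ :=
  sInf {k | 1 ≤ k ∧ ∃ F : Set (Finset V), IsMEternalGuardFamily G k F}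

/-- `s` is an independent set of vertices of `G`. -/
def IsIndepFinset (G : SimpleGraph V) (s : Finset V) : Prop :=
  ∀ a ∈ s, ∀ b ∈ s, a ≠ b → ¬ G.Adj a b

/-- The independence number `α(G)`. -/
noncomputable def indepNum (G : SimpleGraph V) : ℕ :=
  sSup {k | ∃ s : Finset V, IsIndepFinset G s ∧ s.card = k}

/-- The clique covering number `θ(G)`: the least `t` such that the vertices can be
partitioned into `t` classes each inducing a complete subgraph. -/
noncomputable def cliqueCoverNum (G : SimpleGraph V) : ℕ :=
  sInf {t | ∃ f : V → Fin t, ∀ a b : V, f a = f b → a ≠ b → G.Adj a b}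

/-- The connected domination number `γ_c(G)`. -/
noncomputable def connDomNum (G : SimpleGraph V) : ℕ :=
  sInf {k | ∃ D : Finset V,
    Dominates G D ∧ (G.induce (↑D : Set V)).Connected ∧ D.card = k}

open scoped Classical in
/-- The weight of a part of a neo-colonization: `1` for a clique,
`1 + γ_c` of the induced subgraph otherwise. -/
noncomputable def partWeight (G : SimpleGraph V) (s : Finset V) : ℕ :=
  if G.IsClique (↑s : Set V) then 1 else 1 + connDomNum (G.induce (↑s : Set V))

/-- `P` is a neo-colonization of `G`: a partition of the vertex set into
parts inducing connected subgraphs. -/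
def IsNeoColonization (G : SimpleGraph V) (P : Finset (Finset V)) : Prop :=
  (∀ s ∈ P, s.Nonempty) ∧ (∀ v : V, ∃! s, s ∈ P ∧ v ∈ s) ∧
    ∀ s ∈ P, (G.induce (↑s : Set V)).Connected

/-- `θ_c(G)`: the minimum weight of a neo-colonization of `G`. -/
noncomputable def thetaC (G : SimpleGraph V) : ℕ :=
  sInf {w | ∃ P : Finset (Finset V), IsNeoColonization G P ∧ ∑ s ∈ P, partWeight G s = w}

section Aux

lemma connected_single (G : SimpleGraph V) (v : V) :
    (G.induce ({v} : Set V)).Connected := by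
  rw [SimpleGraph.connected_iff]
  refine ⟨fun a b => ?_, ⟨⟨v, rfl⟩⟩⟩
  have : a = b := Subtype.ext (a.2.trans b.2.symm)
  rw [this]

lemma connected_pair (G : SimpleGraph V) {a b : V} (hab : G.Adj a b) :
    (G.induce ({a, b} : Set V)).Connected := by
  rw [SimpleGraph.connected_iff]
  refine ⟨fun u v => ?_, ⟨⟨a, Or.inl rfl⟩⟩⟩
  by_cases h : (u : V) = (v : V)
  · rw [Subtype.ext h]
  · refine SimpleGraph.Adj.reachable ?_
    show G.Adj (u : V) (v : V)
    rcases u.2 with hu | hu <;> rcases v.2 with hv | hv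
    · exact absurd (hu.trans hv.symm) h
    · rw [hu, hv]; exact hab
    · rw [hu, hv]; exact hab.symm
    · exact absurd (hu.trans hv.symm) h

open Finset in
lemma indepNum_ge [Fintype V] (G : SimpleGraph V) (s : Finset V)
    (h : IsIndepFinset G s) : s.card ≤ indepNum G := by
  apply le_csSup
  · exact ⟨Fintype.card V, by rintro k ⟨t, -, rfl⟩; exact t.card_le_univ⟩
  · exact ⟨s, h, rfl⟩

open Finset in
lemma thetaC_le_matching [Fintype V] [DecidableEq V] (G : SimpleGraph V)
    (E : Finset (V × V)) (hadj : ∀ e ∈ E, G.Adj e.1 e.2)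
    (hdisj : ∀ e ∈ E, ∀ e' ∈ E, e ≠ e' →
      e.1 ≠ e'.1 ∧ e.1 ≠ e'.2 ∧ e.2 ≠ e'.1 ∧ e.2 ≠ e'.2) :
    thetaC G ≤ Fintype.card V - E.card := by
  classical
  set pb : V × V → Finset V := fun e => {e.1, e.2} with hpb
  set R : Finset V := Finset.univ \ E.biUnion pb with hR
  set P : Finset (Finset V) := E.image pb ∪ R.image (fun v => {v}) with hP
  have hmem : ∀ s ∈ P, (∃ e ∈ E, s = pb e) ∨ (∃ v ∈ R, s = ({v} : Finset V)) := by
    intro s hs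
    rcases mem_union.1 hs with h | h
    · obtain ⟨e, he, rfl⟩ := mem_image.1 h; exact Or.inl ⟨e, he, rfl⟩
    · obtain ⟨v, hv, rfl⟩ := mem_image.1 h; exact Or.inr ⟨v, hv, rfl⟩
  have hpbmem : ∀ {e v}, v ∈ pb e ↔ v = e.1 ∨ v = e.2 := by
    intro e v; simp [hpb]
  have hneo : IsNeoColonization G P := by
    refine ⟨?_, ?_, ?_⟩
    · intro s hs
      rcases hmem s hs with ⟨e, _, rfl⟩ | ⟨v, _, rfl⟩
      · exact ⟨e.1, by simp [hpb]⟩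
      · exact ⟨v, by simp⟩
    · intro v
      by_cases hv : v ∈ E.biUnion pb
      · obtain ⟨e, he, hve⟩ := mem_biUnion.1 hv
        refine ⟨pb e, ⟨mem_union_left _ (mem_image_of_mem _ he), hve⟩, ?_⟩
        rintro s ⟨hs, hvs⟩
        rcases hmem s hs with ⟨e', he', rfl⟩ | ⟨u, hu, rfl⟩
        · by_contra hne
          have hee : e' ≠ e := fun h => hne (by rw [h])
          obtain ⟨h1, h2, h3, h4⟩ := hdisj e' he' e he hee
          rcases hpbmem.1 hvs with rfl | rfl <;> rcases hpbmem.1 hve with h | h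
          · exact h1 h
          · exact h2 h
          · exact h3 h
          · exact h4 h
        · have : u = v := (mem_singleton.1 hvs).symm
          subst this
          exact absurd hv (by simpa [hR] using (mem_sdiff.1 hu).2)
      · have hvR : v ∈ R := mem_sdiff.2 ⟨mem_univ _, hv⟩
        refine ⟨{v}, ⟨mem_union_right _ (mem_image_of_mem _ hvR), mem_singleton_self v⟩, ?_⟩
        rintro s ⟨hs, hvs⟩
        rcases hmem s hs with ⟨e, he, rfl⟩ | ⟨u, hu, rfl⟩
        · exact absurd (mem_biUnion.2 ⟨e, he, hvs⟩) hv
        · rw [mem_singleton.1 hvs]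
    · intro s hs
      rcases hmem s hs with ⟨e, he, rfl⟩ | ⟨v, _, rfl⟩
      · have : ((pb e : Finset V) : Set V) = ({e.1, e.2} : Set V) := by simp [hpb]
        rw [this]; exact connected_pair G (hadj e he)
      · have : (({v} : Finset V) : Set V) = ({v} : Set V) := by simp
        rw [this]; exact connected_single G v
  have hcliq : ∀ s ∈ P, G.IsClique (↑s : Set V) := by
    intro s hs
    rcases hmem s hs with ⟨e, he, rfl⟩ | ⟨v, _, rfl⟩
    · have : ((pb e : Finset V) : Set V) = ({e.1, e.2} : Set V) := by simp [hpb]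
      rw [this]
      exact SimpleGraph.isClique_pair.2 fun _ => hadj e he
    · simp
  have hsum : ∑ s ∈ P, partWeight G s = P.card := by
    rw [card_eq_sum_ones]
    refine Finset.sum_congr rfl fun s hs => ?_
    unfold partWeight
    rw [if_pos (hcliq s hs)]
  have hthe : thetaC G ≤ P.card := by
    rw [← hsum]
    exact Nat.sInf_le ⟨P, hneo, rfl⟩
  have hb2 : (E.biUnion pb).card = 2 * E.card := by
    rw [card_biUnion]
    · rw [Finset.sum_congr rfl (fun e he => ?_), Finset.sum_const, smul_eq_mul, mul_comm]
      have hne : e.1 ≠ e.2 := (hadj e he).ne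
      simp [hpb, card_insert_of_notMem, hne]
    · intro e he e' he' hne
      obtain ⟨h1, h2, h3, h4⟩ := hdisj e he e' he' hne
      simp only [disjoint_left, hpb]
      intro x hx hx'
      simp only [mem_insert, mem_singleton] at hx hx'
      rcases hx with rfl | rfl <;> rcases hx' with h | h
      · exact h1 h
      · exact h2 h
      · exact h3 h
      · exact h4 h
  have hble : (E.biUnion pb).card ≤ Fintype.card V := by
    simpa using card_le_univ (E.biUnion pb)
  have hRcard : R.card = Fintype.card V - 2 * E.card := by
    rw [hR, card_sdiff_of_subset (subset_univ _), card_univ, hb2]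
  have hPcard : P.card ≤ E.card + R.card :=
    le_trans (card_union_le _ _) (add_le_add (card_image_le) (card_image_le))
  omega

end Aux

/-- every finite bipartite graph has a neo-colonization of total weight
at most its independence number, i.e. `θ_c(G) ≤ α(G)`. -/
theorem stmt0 [Fintype V] [DecidableEq V] (G : SimpleGraph V) (hbip : G.Colorable 2) :
    thetaC G ≤ indepNum G := by
  classical
  obtain ⟨c⟩ := hbip
  set A : Finset V := Finset.univ.filter (fun v => c v = 0) with hA
  set B : Finset V := Finset.univ.filter (fun v => ¬ c v = 0) with hB
  have hnAB : A.card + B.card = Fintype.card V := by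
    rw [hA, hB]
    rw [Finset.card_filter_add_card_filter_not, Finset.card_univ]
  have hABdisj : ∀ v, v ∈ A → v ∈ B → False := by
    intro v hva hvb
    rw [hA, Finset.mem_filter] at hva
    rw [hB, Finset.mem_filter] at hvb
    exact hvb.2 hva.2
  have hBindep : ∀ u, u ∈ B → ∀ w, w ∈ B → ¬ G.Adj u w := by
    intro u hu w hw hadj
    rw [hB, Finset.mem_filter] at hu hw
    have h1 : ∀ x : Fin 2, x ≠ 0 → x = 1 := by decide
    exact c.valid hadj ((h1 _ hu.2).trans (h1 _ hw.2).symm)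
  have hAindep : ∀ u, u ∈ A → ∀ w, w ∈ A → ¬ G.Adj u w := by
    intro u hu w hw hadj
    rw [hA, Finset.mem_filter] at hu hw
    exact c.valid hadj (hu.2.trans hw.2.symm)
  set N : Finset V → Finset V := fun S => B.filter (fun y => ∃ x ∈ S, G.Adj x y) with hN
  set d : ℕ := A.powerset.sup (fun S => S.card - (N S).card) with hd
  have hdle : ∀ S ⊆ A, S.card ≤ (N S).card + d := by
    intro S hS
    have h2 : S.card - (N S).card ≤ d :=
      Finset.le_sup (f := fun S => S.card - (N S).card) (Finset.mem_powerset.2 hS)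
    omega
  -- independent set of size ≥ B.card + d
  obtain ⟨I, hInd, hIcard⟩ : ∃ I : Finset V, IsIndepFinset G I ∧ B.card + d ≤ I.card := by
    rcases Nat.eq_zero_or_pos d with hd0 | hdpos
    · refine ⟨B, ?_, by omega⟩
      intro a ha b hb _ hadj
      exact hBindep a ha b hb hadj
    · obtain ⟨S₀, hS₀mem, hS₀⟩ := Finset.exists_mem_eq_sup A.powerset
        ⟨∅, Finset.empty_mem_powerset A⟩ (fun S => S.card - (N S).card)
      have hS₀A : S₀ ⊆ A := Finset.mem_powerset.1 hS₀mem
      have hNS₀B : N S₀ ⊆ B := Finset.filter_subset _ _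
      have hScard : S₀.card = (N S₀).card + d := by
        have h3 : d = S₀.card - (N S₀).card := by rw [hd, hS₀]
        omega
      refine ⟨S₀ ∪ (B \ N S₀), ?_, ?_⟩
      · intro a ha b hb hne hadj
        rcases Finset.mem_union.1 ha with ha' | ha' <;>
          rcases Finset.mem_union.1 hb with hb' | hb'
        · exact hAindep a (hS₀A ha') b (hS₀A hb') hadj
        · have hbB := (Finset.mem_sdiff.1 hb').1
          exact (Finset.mem_sdiff.1 hb').2
            (Finset.mem_filter.2 ⟨hbB, a, ha', hadj⟩)
        · have haB := (Finset.mem_sdiff.1 ha').1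
          exact (Finset.mem_sdiff.1 ha').2
            (Finset.mem_filter.2 ⟨haB, b, hb', hadj.symm⟩)
        · exact hBindep a (Finset.mem_sdiff.1 ha').1 b (Finset.mem_sdiff.1 hb').1 hadj
      · have hdisj : Disjoint S₀ (B \ N S₀) := by
          rw [Finset.disjoint_left]
          intro x hx hx'
          exact hABdisj x (hS₀A hx) (Finset.mem_sdiff.1 hx').1
        rw [Finset.card_union_of_disjoint hdisj, Finset.card_sdiff_of_subset hNS₀B]
        have := Finset.card_le_card hNS₀B
        omega
  -- Hall's theorem with d dummy vertices
  set t : {x // x ∈ A} → Finset (V ⊕ Fin d) := fun x =>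
    ((B.filter (fun y => G.Adj x.1 y)).image Sum.inl) ∪
      ((Finset.univ : Finset (Fin d)).image Sum.inr) with ht
  have hall : ∀ s : Finset {x // x ∈ A}, s.card ≤ (s.biUnion t).card := by
    intro s
    rcases s.eq_empty_or_nonempty with rfl | ⟨x0, hx0⟩
    · simp
    set S : Finset V := s.image Subtype.val with hS
    have hSA : S ⊆ A := by
      intro x hx
      obtain ⟨y, _, rfl⟩ := Finset.mem_image.1 hx
      exact y.2
    have hsub : ((N S).image Sum.inl ∪
        ((Finset.univ : Finset (Fin d)).image Sum.inr) : Finset (V ⊕ Fin d)) ⊆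
        s.biUnion t := by
      intro z hz
      rcases Finset.mem_union.1 hz with hz | hz
      · obtain ⟨y, hy, rfl⟩ := Finset.mem_image.1 hz
        rw [hN] at hy
        obtain ⟨hyB, x, hxS, hxy⟩ := Finset.mem_filter.1 hy
        obtain ⟨x', hx's, hx'⟩ := Finset.mem_image.1 hxS
        refine Finset.mem_biUnion.2 ⟨x', hx's, ?_⟩
        rw [ht]
        exact Finset.mem_union_left _
          (Finset.mem_image_of_mem _ (Finset.mem_filter.2 ⟨hyB, by rw [hx']; exact hxy⟩))
      · obtain ⟨j, _, rfl⟩ := Finset.mem_image.1 hz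
        exact Finset.mem_biUnion.2 ⟨x0, hx0, Finset.mem_union_right _
          (Finset.mem_image_of_mem _ (Finset.mem_univ j))⟩
    have hcardL : ((N S).image Sum.inl ∪
        ((Finset.univ : Finset (Fin d)).image Sum.inr) : Finset (V ⊕ Fin d)).card =
        (N S).card + d := by
      rw [Finset.card_union_of_disjoint, Finset.card_image_of_injective _ Sum.inl_injective,
        Finset.card_image_of_injective _ Sum.inr_injective, Finset.card_univ, Fintype.card_fin]
      rw [Finset.disjoint_left]
      rintro z hz hz'
      obtain ⟨y, _, rfl⟩ := Finset.mem_image.1 hz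
      obtain ⟨j, _, hj⟩ := Finset.mem_image.1 hz'
      simp at hj
    have hscard : s.card = S.card :=
      (Finset.card_image_of_injective _ Subtype.val_injective).symm
    calc s.card = S.card := hscard
      _ ≤ (N S).card + d := hdle S hSA
      _ = _ := hcardL.symm
      _ ≤ (s.biUnion t).card := Finset.card_le_card hsub
  obtain ⟨f, hfinj, hft⟩ := (Finset.all_card_le_biUnion_card_iff_exists_injective t).1 hall
  set matched : Finset {x // x ∈ A} := Finset.univ.filter (fun x => (f x).isLeft)
    with hmatched
  set g : {x // x ∈ A} → V := fun x => Sum.elim id (fun _ => x.1) (f x) with hg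
  have hfg : ∀ x ∈ matched, f x = Sum.inl (g x) := by
    intro x hx
    rw [hmatched, Finset.mem_filter] at hx
    rcases hfx : f x with a | j
    · simp [hg, hfx]
    · rw [hfx] at hx; simp at hx
  have hkey : ∀ x ∈ matched, g x ∈ B ∧ G.Adj x.1 (g x) := by
    intro x hx
    have hfx := hft x
    rw [hfg x hx, ht] at hfx
    rcases Finset.mem_union.1 hfx with h | h
    · obtain ⟨y, hy, hy'⟩ := Finset.mem_image.1 h
      have : y = g x := Sum.inl_injective hy'
      subst this
      exact ⟨(Finset.mem_filter.1 hy).1, (Finset.mem_filter.1 hy).2⟩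
    · obtain ⟨j, _, hj⟩ := Finset.mem_image.1 h
      exact absurd hj (by simp)
  set E : Finset (V × V) := matched.image (fun x => (x.1, g x)) with hE
  have hadjE : ∀ e ∈ E, G.Adj e.1 e.2 := by
    intro e he
    obtain ⟨x, hx, rfl⟩ := Finset.mem_image.1 he
    exact (hkey x hx).2
  have hdisjE : ∀ e ∈ E, ∀ e' ∈ E, e ≠ e' →
      e.1 ≠ e'.1 ∧ e.1 ≠ e'.2 ∧ e.2 ≠ e'.1 ∧ e.2 ≠ e'.2 := by
    intro e he e' he' hne
    obtain ⟨x, hx, rfl⟩ := Finset.mem_image.1 he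
    obtain ⟨y, hy, rfl⟩ := Finset.mem_image.1 he'
    have hxy : x ≠ y := fun h => hne (by rw [h])
    refine ⟨fun h => hxy (Subtype.ext h), ?_, ?_, ?_⟩
    · intro h
      have h' : (x : V) = g y := h
      exact hABdisj x.1 x.2 (h' ▸ (hkey y hy).1)
    · intro h
      have h' : g x = (y : V) := h
      exact hABdisj y.1 y.2 (h'.symm ▸ (hkey x hx).1)
    · intro h
      have h' : g x = g y := h
      exact hxy (hfinj (by rw [hfg x hx, hfg y hy, h']))
  have hEcard : E.card = matched.card := by
    rw [hE]
    apply Finset.card_image_of_injOn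
    intro x _ y _ h
    exact Subtype.ext (congrArg Prod.fst h)
  set unmatched : Finset {x // x ∈ A} := Finset.univ.filter (fun x => ¬ (f x).isLeft)
    with hunmatched
  have hsplit : matched.card + unmatched.card = A.card := by
    rw [hmatched, hunmatched, Finset.card_filter_add_card_filter_not,
      Finset.card_univ, Fintype.card_coe]
  have hunm : unmatched.card ≤ d := by
    have h1 : unmatched.image f ⊆ (Finset.univ : Finset (Fin d)).image Sum.inr := by
      intro z hz
      obtain ⟨x, hx, rfl⟩ := Finset.mem_image.1 hz
      rw [hunmatched, Finset.mem_filter] at hx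
      rcases hfx : f x with a | j
      · rw [hfx] at hx; simp at hx
      · exact Finset.mem_image_of_mem _ (Finset.mem_univ j)
    calc unmatched.card = (unmatched.image f).card :=
          (Finset.card_image_of_injective _ hfinj).symm
      _ ≤ ((Finset.univ : Finset (Fin d)).image Sum.inr).card := Finset.card_le_card h1
      _ = d := by
          rw [Finset.card_image_of_injective _ Sum.inr_injective, Finset.card_univ,
            Fintype.card_fin]
  have hmain := thetaC_le_matching G E hadjE hdisjE
  have hIval := indepNum_ge G I hInd
  omega
end

section
/- Let G be a finite simple graph that is not complete. If every vertex of G is contained in a dominating set of size 2, then γ_m^∞(G) = 2. -/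
variable {V : Type*}

lemma aux_move [DecidableEq V] (G : SimpleGraph V) {u v r w : V}
    (huv : u ≠ v) (hrw : r ≠ w)
    (hur : G.Adj u r) (hwv : w = v ∨ G.Adj v w) :
    ∃ g : V → V, Set.BijOn g ↑({u, v} : Finset V) ↑({r, w} : Finset V) ∧
      ∀ x ∈ ({u, v} : Finset V), g x = x ∨ G.Adj x (g x) := by
  refine ⟨fun x => if x = u then r else if x = v then w else x, ?_, ?_⟩
  · constructor
    · intro x hx
      simp only [Finset.coe_insert, Finset.coe_singleton, Set.mem_insert_iff,
        Set.mem_singleton_iff] at hx ⊢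
      rcases hx with rfl | rfl
      · simp
      · simp [huv.symm]
    constructor
    · intro x hx y hy hxy
      simp only [Finset.coe_insert, Finset.coe_singleton, Set.mem_insert_iff,
        Set.mem_singleton_iff] at hx hy
      rcases hx with rfl | rfl <;> rcases hy with rfl | rfl <;>
        simp_all [huv, huv.symm, hrw, hrw.symm]
    · intro y hy
      simp only [Finset.coe_insert, Finset.coe_singleton, Set.mem_insert_iff,
        Set.mem_singleton_iff] at hy
      rcases hy with rfl | rfl
      · exact ⟨u, by simp, by simp⟩
      · exact ⟨v, by simp [huv.symm], by simp [huv.symm]⟩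
  · intro x hx
    simp only [Finset.mem_insert, Finset.mem_singleton] at hx
    rcases hx with rfl | rfl
    · right; simpa using hur
    · rcases hwv with rfl | hadj
      · left; simp [huv.symm]
      · right; simpa [huv.symm] using hadj

lemma family_works [DecidableEq V] (G : SimpleGraph V) (v0 : V)
    (h : ∀ v : V, ∃ D : Finset V, Dominates G D ∧ D.card = 2 ∧ v ∈ D) :
    IsMEternalGuardFamily G 2 {D : Finset V | Dominates G D ∧ D.card = 2} := by
  refine ⟨?_, fun D hD => hD, ?_⟩
  · obtain ⟨D, hD1, hD2, _⟩ := h v0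
    exact ⟨D, hD1, hD2⟩
  · rintro D ⟨hdom, hcard⟩ r hr
    obtain ⟨u, v, huv, rfl⟩ := Finset.card_eq_two.mp hcard
    have hru : r ≠ u := fun e => hr (by simp [e])
    have hrv : r ≠ v := fun e => hr (by simp [e])
    obtain ⟨Dr, hDrdom, hDrcard, hrDr⟩ := h r
    obtain ⟨x, y, hxy, rfl⟩ := Finset.card_eq_two.mp hDrcard
    obtain ⟨w, hrw, hDrdom⟩ : ∃ w : V, r ≠ w ∧ Dominates G {r, w} := by
      simp only [Finset.mem_insert, Finset.mem_singleton] at hrDr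
      rcases hrDr with rfl | rfl
      · exact ⟨y, hxy, hDrdom⟩
      · exact ⟨x, fun e => hxy e.symm, by rwa [Finset.pair_comm] at hDrdom⟩
    have hmemF : ({r, w} : Finset V) ∈ {D : Finset V | Dominates G D ∧ D.card = 2} :=
      ⟨hDrdom, Finset.card_pair hrw⟩
    have hrmem : r ∈ ({r, w} : Finset V) := Finset.mem_insert_self r {w}
    have hwuv : (w = u ∨ G.Adj u w) ∨ (w = v ∨ G.Adj v w) := by
      by_cases hw : w ∈ ({u, v} : Finset V)
      · simp only [Finset.mem_insert, Finset.mem_singleton] at hw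
        rcases hw with rfl | rfl
        · exact Or.inl (Or.inl rfl)
        · exact Or.inr (Or.inl rfl)
      · obtain ⟨p, hp, hpw⟩ := hdom w hw
        simp only [Finset.mem_insert, Finset.mem_singleton] at hp
        rcases hp with rfl | rfl
        · exact Or.inl (Or.inr hpw)
        · exact Or.inr (Or.inr hpw)
    by_cases hwv : w = v ∨ G.Adj v w
    · by_cases hur : G.Adj u r
      · obtain ⟨g, hbij, hmv⟩ := aux_move G huv hrw hur hwv
        exact ⟨{r, w}, hmemF, hrmem, g, hbij, hmv⟩
      · have hvr : G.Adj v r := by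
          obtain ⟨p, hp, hpr⟩ := hdom r hr
          simp only [Finset.mem_insert, Finset.mem_singleton] at hp
          rcases hp with rfl | rfl
          · exact absurd hpr hur
          · exact hpr
        have hwu : w = u ∨ G.Adj u w := by
          by_cases hwu' : w = u
          · exact Or.inl hwu'
          · have hu : u ∉ ({r, w} : Finset V) := by
              simp only [Finset.mem_insert, Finset.mem_singleton]; push_neg; exact ⟨Ne.symm hru, fun e => hwu' e.symm⟩
            obtain ⟨q, hq, hqu⟩ := hDrdom u hu
            simp only [Finset.mem_insert, Finset.mem_singleton] at hq
            rcases hq with rfl | rfl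
            · exact absurd hqu.symm hur
            · exact Or.inr hqu.symm
        obtain ⟨g, hbij, hmv⟩ := aux_move G huv.symm hrw hvr hwu
        rw [Finset.pair_comm v u] at hbij hmv
        exact ⟨{r, w}, hmemF, hrmem, g, hbij, hmv⟩
    · have hwu : w = u ∨ G.Adj u w := hwuv.resolve_right hwv
      have hvr : G.Adj v r := by
        have hv : v ∉ ({r, w} : Finset V) := by
          simp only [Finset.mem_insert, Finset.mem_singleton]
          push_neg
          exact ⟨Ne.symm hrv, fun e => hwv (Or.inl e.symm)⟩
        obtain ⟨q, hq, hqv⟩ := hDrdom v hv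
        simp only [Finset.mem_insert, Finset.mem_singleton] at hq
        rcases hq with rfl | rfl
        · exact hqv.symm
        · exact absurd hqv.symm (fun e => hwv (Or.inr e))
      obtain ⟨g, hbij, hmv⟩ := aux_move G huv.symm hrw hvr hwu
      rw [Finset.pair_comm v u] at hbij hmv
      exact ⟨{r, w}, hmemF, hrmem, g, hbij, hmv⟩

/-- if `G` is not complete and every vertex of `G` lies in a
dominating set of size `2`, then `γ_m^∞(G) = 2`. -/
theorem stmt3 [Fintype V] [DecidableEq V] (G : SimpleGraph V)
    (hnc : ∃ a b : V, a ≠ b ∧ ¬ G.Adj a b)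
    (h : ∀ v : V, ∃ D : Finset V, Dominates G D ∧ D.card = 2 ∧ v ∈ D) :
    mEternalDomNum G = 2 := by
  obtain ⟨a, b, hab, hnadj⟩ := hnc
  have h2 : 2 ∈ {k | 1 ≤ k ∧ ∃ F : Set (Finset V), IsMEternalGuardFamily G k F} :=
    ⟨one_le_two, _, family_works G a h⟩
  have h1 : ∀ k ∈ {k | 1 ≤ k ∧ ∃ F : Set (Finset V), IsMEternalGuardFamily G k F}, 2 ≤ k := by
    rintro k ⟨hk1, F, hF⟩
    by_contra hlt
    have hk : k = 1 := by omega
    subst hk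
    obtain ⟨⟨D0, hD0⟩, hprop, hmove⟩ := hF
    have ha : ∃ Da ∈ F, a ∈ Da := by
      by_cases haD : a ∈ D0
      · exact ⟨D0, hD0, haD⟩
      · obtain ⟨D', hD', haD', _⟩ := hmove D0 hD0 a haD
        exact ⟨D', hD', haD'⟩
    obtain ⟨Da, hDa, haDa⟩ := ha
    obtain ⟨hdomA, hcardA⟩ := hprop Da hDa
    obtain ⟨c, rfl⟩ := Finset.card_eq_one.mp hcardA
    have hca : c = a := by have := haDa; simp only [Finset.mem_singleton] at this; exact this.symm
    subst hca
    have hbmem : b ∉ ({c} : Finset V) := by simpa using (Ne.symm hab)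
    obtain ⟨p, hp, hpb⟩ := hdomA b hbmem
    simp only [Finset.mem_singleton] at hp
    subst hp
    exact hnadj hpb
  refine le_antisymm (Nat.sInf_le h2) (le_csInf ⟨2, h2⟩ h1)
end

section
/- Let G be a finite simple graph with independence number α(G) = 3. If G has a vertex v such that every vertex of every maximum independent set of G lies in the closed neighborhood N[v] of v, then γ_m^∞(G) = 2. -/
variable {V : Type*}

/-! ### Auxiliary material for stmt4 -/

/-- Moving two guards `p → p'`, `q → q'` gives a legal guard movement. -/
lemma pair_move [DecidableEq V] (G : SimpleGraph V) {p q p' q' : V}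
    (hpq : p ≠ q) (hpq' : p' ≠ q')
    (h1 : p = p' ∨ G.Adj p p') (h2 : q = q' ∨ G.Adj q q') :
    ∃ g : V → V, Set.BijOn g ↑({p, q} : Finset V) ↑({p', q'} : Finset V) ∧
      ∀ z ∈ ({p, q} : Finset V), g z = z ∨ G.Adj z (g z) := by
  refine ⟨fun z => if z = p then p' else q', ⟨?_, ?_, ?_⟩, ?_⟩
  · intro z hz
    simp only [Finset.coe_insert, Finset.coe_singleton, Set.mem_insert_iff,
      Set.mem_singleton_iff] at hz ⊢
    rcases hz with rfl | rfl
    · simp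
    · simp [Ne.symm hpq]
  · intro z1 hz1 z2 hz2 he
    simp only [Finset.coe_insert, Finset.coe_singleton, Set.mem_insert_iff,
      Set.mem_singleton_iff] at hz1 hz2
    simp only [] at he
    rcases hz1 with rfl | rfl <;> rcases hz2 with rfl | rfl
    · rfl
    · simp [Ne.symm hpq] at he; exact absurd he hpq'
    · simp [Ne.symm hpq] at he; exact absurd he.symm hpq'
    · rfl
  · intro y hy
    simp only [Finset.coe_insert, Finset.coe_singleton, Set.mem_insert_iff,
      Set.mem_singleton_iff] at hy
    rcases hy with rfl | rfl
    · exact ⟨p, by simp, by simp⟩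
    · exact ⟨q, by simp, by simp [Ne.symm hpq]⟩
  · intro z hz
    simp only [Finset.mem_insert, Finset.mem_singleton] at hz
    rcases hz with rfl | rfl
    · simp only [if_pos rfl]
      rcases h1 with h | h
      · exact Or.inl h.symm
      · exact Or.inr h
    · simp only [if_neg (Ne.symm hpq)]
      rcases h2 with h | h
      · exact Or.inl h.symm
      · exact Or.inr h

/-- The guard family used for the upper bound in `stmt4`. -/
def GuardFam [DecidableEq V] (G : SimpleGraph V) (v : V) : Set (Finset V) :=
  {D | (∃ w y : V, ¬G.Adj v w ∧ w ≠ v ∧ ¬G.Adj y w ∧ y ≠ w ∧ D = {y, w}) ∨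
    (∃ x : V, x ≠ v ∧ (∀ w : V, ¬G.Adj v w → w ≠ v → x = w ∨ G.Adj x w) ∧ D = {v, x})}

section Guard

variable [DecidableEq V] {G : SimpleGraph V} {v : V}

lemma mem_guardFam_1 {w y : V} (h1 : ¬G.Adj v w) (h2 : w ≠ v) (h3 : ¬G.Adj y w)
    (h4 : y ≠ w) : ({y, w} : Finset V) ∈ GuardFam G v :=
  Or.inl ⟨w, y, h1, h2, h3, h4, rfl⟩

lemma mem_guardFam_2 {x : V} (h1 : x ≠ v)
    (h2 : ∀ w : V, ¬G.Adj v w → w ≠ v → x = w ∨ G.Adj x w) :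
    ({v, x} : Finset V) ∈ GuardFam G v :=
  Or.inr ⟨x, h1, h2, rfl⟩

variable (core : ∀ a b w : V, ¬G.Adj v w → w ≠ v → ¬G.Adj a b → ¬G.Adj a w → ¬G.Adj b w →
      a ≠ b → a ≠ w → b ≠ w → False)

include core

/-- Transitions out of a type-1 configuration `{y, w}`. -/
lemma trans1 (w y r : V) (hvw : ¬G.Adj v w) (hwv : w ≠ v) (hyw : ¬G.Adj y w)
    (hynw : y ≠ w) (hry : r ≠ y) (hrw : r ≠ w) :
    ∃ D' ∈ GuardFam G v, r ∈ D' ∧ ∃ g : V → V,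
      Set.BijOn g ↑({y, w} : Finset V) ↑D' ∧
      ∀ z ∈ ({y, w} : Finset V), g z = z ∨ G.Adj z (g z) := by
  -- y is in the closed neighbourhood of v
  have hy : y = v ∨ G.Adj y v := by
    by_cases hyv : y = v
    · exact Or.inl hyv
    · by_contra h
      push_neg at h
      exact core v y w hvw hwv (fun hh => h.2 hh.symm) hvw hyw (Ne.symm hyv) (Ne.symm hwv) hynw
  by_cases hrv : r = v
  · subst hrv
    refine ⟨{r, w}, mem_guardFam_1 hvw hwv hvw hrw, by simp, ?_⟩
    exact pair_move G hynw hrw hy (Or.inl rfl)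
  · by_cases hadjrw : G.Adj r w
    · by_cases hrK : ∀ w' : V, ¬G.Adj v w' → w' ≠ v → r = w' ∨ G.Adj r w'
      · -- retreat to {v, r}
        refine ⟨{v, r}, mem_guardFam_2 hrv hrK, by simp, ?_⟩
        exact pair_move G hynw (Ne.symm hrv) hy (Or.inr hadjrw.symm)
      · push_neg at hrK
        obtain ⟨w'', hvw'', hw''v, hrw'', hnadjrw''⟩ := hrK
        have hww'' : w ≠ w'' := by
          rintro rfl; exact hnadjrw'' hadjrw
        have hadjww'' : G.Adj w w'' := by
          by_contra h
          exact core v w'' w hvw hwv hvw'' hvw (fun hh => h hh.symm) (Ne.symm hw''v)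
            (Ne.symm hwv) (Ne.symm hww'')
        have hyne'' : y ≠ w'' := by
          rintro rfl; exact hyw hadjww''.symm
        have hkey : G.Adj y r ∨ G.Adj y w'' := by
          by_contra h
          push_neg at h
          exact core y r w'' hvw'' hw''v h.1 h.2 hnadjrw'' (Ne.symm hry) hyne'' hrw''
        rcases hkey with h | h
        · refine ⟨{r, w''}, mem_guardFam_1 hvw'' hw''v hnadjrw'' hrw'', by simp, ?_⟩
          exact pair_move G hynw hrw'' (Or.inr h) (Or.inr hadjww'')
        · refine ⟨{w'', r}, ?_, by simp, ?_⟩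
          · rw [Finset.pair_comm]
            exact mem_guardFam_1 hvw'' hw''v hnadjrw'' hrw''
          · exact pair_move G hynw (Ne.symm hrw'') (Or.inr h) (Or.inr hadjrw.symm)
    · -- r is a non-neighbour of w : move y to r
      have hadjyr : G.Adj y r := by
        by_contra h
        exact core y r w hvw hwv h hyw hadjrw (Ne.symm hry) hynw hrw
      refine ⟨{r, w}, mem_guardFam_1 hvw hwv hadjrw hrw, by simp, ?_⟩
      exact pair_move G hynw hrw (Or.inr hadjyr) (Or.inl rfl)

/-- The guard family witnesses `γ_m^∞ ≤ 2`. -/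
lemma guardFam_spec (x0 : V) (hx0 : x0 ≠ v)
    (hx0K : ∀ w : V, ¬G.Adj v w → w ≠ v → x0 = w ∨ G.Adj x0 w) :
    IsMEternalGuardFamily G 2 (GuardFam G v) := by
  refine ⟨⟨{v, x0}, mem_guardFam_2 hx0 hx0K⟩, ?_, ?_⟩
  · rintro D (⟨w, y, hvw, hwv, hyw, hynw, rfl⟩ | ⟨x, hxv, hxK, rfl⟩)
    · refine ⟨?_, Finset.card_pair hynw⟩
      intro u hu
      simp only [Finset.mem_insert, Finset.mem_singleton, not_or] at hu
      obtain ⟨huy, huw⟩ := hu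
      by_cases h1 : G.Adj y u
      · exact ⟨y, by simp, h1⟩
      by_cases h2 : G.Adj w u
      · exact ⟨w, by simp, h2⟩
      exact absurd (core y u w hvw hwv h1 hyw (fun hh => h2 hh.symm) (Ne.symm huy) hynw huw)
        (fun hh => hh)
    · refine ⟨?_, Finset.card_pair (Ne.symm hxv)⟩
      intro u hu
      simp only [Finset.mem_insert, Finset.mem_singleton, not_or] at hu
      obtain ⟨huv, hux⟩ := hu
      by_cases h1 : G.Adj v u
      · exact ⟨v, by simp, h1⟩
      rcases hxK u h1 huv with h | h
      · exact absurd h.symm hux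
      · exact ⟨x, by simp, h⟩
  · rintro D (⟨w, y, hvw, hwv, hyw, hynw, rfl⟩ | ⟨x, hxv, hxK, rfl⟩) r hr
    · simp only [Finset.mem_insert, Finset.mem_singleton, not_or] at hr
      exact trans1 core w y r hvw hwv hyw hynw hr.1 hr.2
    · simp only [Finset.mem_insert, Finset.mem_singleton, not_or] at hr
      obtain ⟨hrv, hrx⟩ := hr
      by_cases hvx : G.Adj v x
      · by_cases hvr : G.Adj v r
        · by_cases hrK : ∀ w' : V, ¬G.Adj v w' → w' ≠ v → r = w' ∨ G.Adj r w'
          · refine ⟨{r, v}, ?_, by simp, ?_⟩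
            · rw [Finset.pair_comm]
              exact mem_guardFam_2 hrv hrK
            · exact pair_move G (Ne.symm hxv) hrv (Or.inr hvr) (Or.inr hvx.symm)
          · push_neg at hrK
            obtain ⟨w'', hvw'', hw''v, hrw'', hnadjrw''⟩ := hrK
            refine ⟨{r, w''}, mem_guardFam_1 hvw'' hw''v hnadjrw'' hrw'', by simp, ?_⟩
            refine pair_move G (Ne.symm hxv) hrw'' (Or.inr hvr) ?_
            exact hxK w'' hvw'' hw''v
        · -- r lies outside N[v]
          refine ⟨{v, r}, mem_guardFam_1 hvr hrv hvr (Ne.symm hrv), by simp, ?_⟩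
          refine pair_move G (Ne.symm hxv) (Ne.symm hrv) (Or.inl rfl) ?_
          rcases hxK r hvr hrv with h | h
          · exact absurd h.symm hrx
          · exact Or.inr h
      · -- x is outside N[v]: the configuration is also of type 1
        exact trans1 core x v r hvx hxv hvx (Ne.symm hxv) hrv hrx

end Guard

/-- if `α(G) = 3` and some vertex `v` dominates every vertex of every
maximum independent set, then `γ_m^∞(G) = 2`. -/
theorem stmt4 [Fintype V] [DecidableEq V] (G : SimpleGraph V)
    (hα : indepNum G = 3) (v : V)
    (hv : ∀ s : Finset V, IsIndepFinset G s → s.card = indepNum G →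
      ∀ u ∈ s, u = v ∨ G.Adj v u) :
    mEternalDomNum G = 2 := by
  classical
  -- extract an independent triple
  have h3mem : 3 ∈ {k | ∃ s : Finset V, IsIndepFinset G s ∧ s.card = k} := by
    rw [← hα]
    unfold indepNum
    refine Nat.sSup_mem ⟨0, ∅, fun a ha => absurd ha (by simp), by simp⟩
      ⟨Fintype.card V, ?_⟩
    rintro k ⟨s, -, rfl⟩
    simpa using Finset.card_le_univ s
  obtain ⟨s, hsind, hscard⟩ := h3mem
  obtain ⟨a, b, c, hab, hac, hbc, rfl⟩ := Finset.card_eq_three.mp hscard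
  have hnab : ¬G.Adj a b := hsind a (by simp) b (by simp) hab
  have hnbc : ¬G.Adj b c := hsind b (by simp) c (by simp) hbc
  -- the core structural lemma: no independent triple meets the complement of N[v]
  have core : ∀ a b w : V, ¬G.Adj v w → w ≠ v → ¬G.Adj a b → ¬G.Adj a w → ¬G.Adj b w →
      a ≠ b → a ≠ w → b ≠ w → False := by
    intro p q w h1 h2 h3 h4 h5 h6 h7 h8
    have hind : IsIndepFinset G {p, q, w} := by
      intro x hx y hy hxy
      simp only [Finset.mem_insert, Finset.mem_singleton] at hx hy
      rcases hx with rfl | rfl | rfl <;> rcases hy with rfl | rfl | rfl <;>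
        first
          | exact absurd rfl hxy
          | exact h3
          | exact h4
          | exact h5
          | exact fun h => h3 h.symm
          | exact fun h => h4 h.symm
          | exact fun h => h5 h.symm
    have hcard : ({p, q, w} : Finset V).card = 3 := by
      rw [Finset.card_insert_of_notMem (by simp [h6, h7]),
        Finset.card_insert_of_notMem (by simp [h8]), Finset.card_singleton]
    rcases hv {p, q, w} hind (hcard.trans hα.symm) w (by simp) with h | h
    · exact h2 h
    · exact h1 h
  -- the upper bound : 2 is in the defining set
  have h2mem : 2 ∈ {k | 1 ≤ k ∧ ∃ F : Set (Finset V), IsMEternalGuardFamily G k F} := by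
    refine ⟨one_le_two, ?_⟩
    by_cases hC : ∃ w : V, ¬G.Adj v w ∧ w ≠ v
    · obtain ⟨w, hw1, hw2⟩ := hC
      refine ⟨GuardFam G v, guardFam_spec core w hw2 ?_⟩
      intro w' h1 h2
      by_cases hww' : w = w'
      · exact Or.inl hww'
      · right
        by_contra hnadj
        exact core v w' w hw1 hw2 h1 hw1 (fun h => hnadj h.symm) (Ne.symm h2)
          (Ne.symm hw2) (fun h => hww' h.symm)
    · push_neg at hC
      have hav : a ≠ v ∨ b ≠ v := by
        by_contra h
        push_neg at h
        exact hab (h.1.trans h.2.symm)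
      have hx0 : ∃ x0 : V, x0 ≠ v := by
        rcases hav with h | h
        · exact ⟨a, h⟩
        · exact ⟨b, h⟩
      obtain ⟨x0, hx0v⟩ := hx0
      refine ⟨GuardFam G v, guardFam_spec core x0 hx0v ?_⟩
      intro w h1 h2
      exact absurd (hC w h1) h2
  -- the lower bound: no family of size 1 exists
  have hlow : ∀ k ∈ {k | 1 ≤ k ∧ ∃ F : Set (Finset V), IsMEternalGuardFamily G k F},
      2 ≤ k := by
    rintro k ⟨hk1, F, ⟨D0, hD0⟩, hdom, htrans⟩
    by_contra hlt
    have hk : k = 1 := by omega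
    subst hk
    obtain ⟨x, rfl⟩ := Finset.card_eq_one.mp (hdom D0 hD0).2
    have attack : ∀ r m : V, r ≠ x → m ≠ r → ¬G.Adj r m → False := by
      intro r m hrx hmr hadj
      obtain ⟨D', hD', hrD', -⟩ := htrans {x} hD0 r (by simp [hrx])
      obtain ⟨z, rfl⟩ := Finset.card_eq_one.mp (hdom D' hD').2
      have hz : r = z := by simpa using hrD'
      subst hz
      obtain ⟨u, hu, hadj'⟩ := (hdom {r} hD').1 m (by simp [hmr])
      have hu' : u = r := by simpa using hu
      subst hu'
      exact hadj hadj'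
    by_cases hax : a = x
    · exact attack b c (fun h => hab (hax.trans h.symm)) (Ne.symm hbc) hnbc
    · exact attack a b hax (Ne.symm hab) hnab
  unfold mEternalDomNum
  exact le_antisymm (Nat.sInf_le h2mem) (le_csInf ⟨2, h2mem⟩ hlow)
end

section
/- Let H_0, H_1, ..., H_5 be disjoint complete graphs, each of order at least 1, and let H be the graph obtained from their disjoint union by joining every vertex of H_i to every vertex of H_{i+1 (mod 6)} for i = 0,...,5 (i.e., the blow-up of the 6-cycle C_6 by cliques). Then α(H) = 3 and γ_m^∞(H) = 2. -/
variable {V : Type*}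

/-- The blow-up of the 6-cycle `C₆` by cliques of orders `n 0, …, n 5`:
vertex `i` of `C₆` is replaced by a clique on `Fin (n i)`, and every vertex of the
`i`-th clique is joined to every vertex of the `(i±1 mod 6)`-th clique. -/
def blowupC6 (n : Fin 6 → ℕ) : SimpleGraph (Σ i : Fin 6, Fin (n i)) where
  Adj x y := x ≠ y ∧ (x.1 = y.1 ∨ x.1 + 1 = y.1 ∨ y.1 + 1 = x.1)
  symm := by
    constructor
    rintro x y ⟨h1, h2⟩
    refine ⟨h1.symm, ?_⟩
    rcases h2 with h | h | h
    · exact Or.inl h.symm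
    · exact Or.inr (Or.inr h)
    · exact Or.inr (Or.inl h)
  loopless := by
    constructor
    rintro x ⟨h1, -⟩
    exact h1 rfl

section Aux

variable {n : Fin 6 → ℕ}

private lemma bu_ne_of_fst {x y : (Σ i : Fin 6, Fin (n i))} (h : x.1 ≠ y.1) : x ≠ y :=
  fun e => h (congrArg Sigma.fst e)

private lemma adj_mk {x y : (Σ i : Fin 6, Fin (n i))} (h1 : x.1 ≠ y.1)
    (h2 : x.1 = y.1 ∨ x.1 + 1 = y.1 ∨ y.1 + 1 = x.1) : (blowupC6 n).Adj x y :=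
  ⟨bu_ne_of_fst h1, h2⟩

private lemma adj_same {x y : (Σ i : Fin 6, Fin (n i))} (hne : x ≠ y) (h : x.1 = y.1) :
    (blowupC6 n).Adj x y := ⟨hne, Or.inl h⟩

private lemma fin6_cases : ∀ m i : Fin 6,
    m = i ∨ m = i+1 ∨ m = i+2 ∨ m = i+3 ∨ m = i+4 ∨ m = i+5 := by decide

private lemma c6_bound : ∀ T : Finset (Fin 6),
    (∀ a ∈ T, ∀ b ∈ T, a + 1 ≠ b) → T.card ≤ 3 := by decide

/-- Any "antipodal" pair dominates the blow-up. -/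
private lemma dom_pair (a b : (Σ i : Fin 6, Fin (n i))) (hb : b.1 = a.1 + 3) :
    Dominates (blowupC6 n) {a, b} := by
  intro v hv
  simp only [Finset.mem_insert, Finset.mem_singleton, not_or] at hv
  rcases fin6_cases v.1 a.1 with h|h|h|h|h|h
  · exact ⟨a, by simp, adj_same (fun e => hv.1 e.symm) h.symm⟩
  · refine ⟨a, by simp, adj_mk ?_ (Or.inr (Or.inl h.symm))⟩
    rw [h]; exact (by decide : ∀ i : Fin 6, i ≠ i+1) a.1
  · refine ⟨b, by simp, adj_mk ?_ (Or.inr (Or.inr ?_))⟩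
    · rw [h, hb]; exact (by decide : ∀ i : Fin 6, i+3 ≠ i+2) a.1
    · rw [h, hb]; exact (by decide : ∀ i : Fin 6, i+2+1 = i+3) a.1
  · exact ⟨b, by simp, adj_same (fun e => hv.2 e.symm) (hb.trans h.symm)⟩
  · refine ⟨b, by simp, adj_mk ?_ (Or.inr (Or.inl ?_))⟩
    · rw [h, hb]; exact (by decide : ∀ i : Fin 6, i+3 ≠ i+4) a.1
    · rw [h, hb]; exact (by decide : ∀ i : Fin 6, i+3+1 = i+4) a.1
  · refine ⟨a, by simp, adj_mk ?_ (Or.inr (Or.inr ?_))⟩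
    · rw [h]; exact (by decide : ∀ i : Fin 6, i ≠ i+5) a.1
    · rw [h]; exact (by decide : ∀ i : Fin 6, i+5+1 = i) a.1

/-- A bijection between two pairs, sending `a ↦ r` and `b ↦ s`. -/
private lemma bij_pair {α : Type*} [DecidableEq α] {a b r s : α} (hab : a ≠ b) (hrs : r ≠ s) :
    ∃ g : α → α, Set.BijOn g ↑({a, b} : Finset α) ↑({r, s} : Finset α) ∧ g a = r ∧ g b = s := by
  refine ⟨fun v => if v = a then r else if v = b then s else v, ⟨?_, ?_, ?_⟩, by simp,
    by simp [hab, (Ne.symm hab)]⟩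
  · intro x hx
    simp only [Finset.coe_insert, Finset.coe_singleton, Set.mem_insert_iff,
      Set.mem_singleton_iff] at hx ⊢
    rcases hx with rfl | rfl
    · simp
    · simp [Ne.symm hab]
  · intro x hx y hy hxy
    simp only [Finset.coe_insert, Finset.coe_singleton, Set.mem_insert_iff,
      Set.mem_singleton_iff] at hx hy
    rcases hx with rfl | rfl <;> rcases hy with rfl | rfl <;>
      simp only [if_pos rfl, if_neg (Ne.symm hab), if_neg hab] at hxy <;>
      first | rfl | exact absurd hxy hrs | exact absurd hxy.symm hrs
  · intro y hy
    simp only [Finset.coe_insert, Finset.coe_singleton, Set.mem_insert_iff,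
      Set.mem_singleton_iff] at hy
    rcases hy with rfl | rfl
    · exact ⟨a, by simp, by simp⟩
    · exact ⟨b, by simp, by simp [Ne.symm hab]⟩

private lemma guard_move {α : Type*} [DecidableEq α] {G : SimpleGraph α} {a b : α} {g : α → α}
    (Pa : g a = a ∨ G.Adj a (g a)) (Pb : g b = b ∨ G.Adj b (g b)) :
    ∀ v ∈ ({a, b} : Finset α), g v = v ∨ G.Adj v (g v) := by
  intro v hv
  rcases Finset.mem_insert.mp hv with hv | hv
  · subst hv; exact Pa
  · rw [Finset.mem_singleton] at hv; subst hv; exact Pb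

end Aux

/-- for the blow-up `H` of `C₆` by nonempty cliques,
`α(H) = 3` and `γ_m^∞(H) = 2`. -/
theorem stmt6 (n : Fin 6 → ℕ) (hn : ∀ i, 1 ≤ n i) :
    indepNum (blowupC6 n) = 3 ∧ mEternalDomNum (blowupC6 n) = 2 := by
  set V' := (Σ i : Fin 6, Fin (n i))
  set G := blowupC6 n with hG
  -- a canonical vertex in each clique
  have vx : ∀ i : Fin 6, Fin (n i) := fun i => ⟨0, hn i⟩
  -- upper bound for independent sets
  have indep_le : ∀ k, (∃ s : Finset V', IsIndepFinset G s ∧ s.card = k) → k ≤ 3 := by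
    rintro k ⟨s, hs, rfl⟩
    have hinj : Set.InjOn (fun x : V' => x.1) ↑s := by
      intro x hx y hy hxy
      by_contra hne
      exact hs x hx y hy hne ⟨hne, Or.inl hxy⟩
    rw [← Finset.card_image_of_injOn hinj]
    apply c6_bound
    intro p hp q hq hpq
    simp only [Finset.mem_image] at hp hq
    obtain ⟨x, hx, rfl⟩ := hp
    obtain ⟨y, hy, rfl⟩ := hq
    have hne : x ≠ y := by
      refine bu_ne_of_fst fun e => ?_
      rw [e] at hpq
      exact (by decide : ∀ i : Fin 6, i + 1 ≠ i) y.1 hpq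
    exact hs x hx y hy hne ⟨hne, Or.inr (Or.inl hpq)⟩
  constructor
  · -- independence number = 3
    have hmem : (3 : ℕ) ∈ {k | ∃ s : Finset V', IsIndepFinset G s ∧ s.card = k} := by
      refine ⟨{⟨0, vx 0⟩, ⟨2, vx 2⟩, ⟨4, vx 4⟩}, ?_, ?_⟩
      · intro a ha b hb hne hadj
        have h := hadj.2
        simp only [Finset.mem_insert, Finset.mem_singleton] at ha hb
        rcases ha with rfl | rfl | rfl <;> rcases hb with rfl | rfl | rfl
        · exact hne rfl
        · exact (by decide : ¬((0:Fin 6) = 2 ∨ (0:Fin 6)+1 = 2 ∨ (2:Fin 6)+1 = 0)) h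
        · exact (by decide : ¬((0:Fin 6) = 4 ∨ (0:Fin 6)+1 = 4 ∨ (4:Fin 6)+1 = 0)) h
        · exact (by decide : ¬((2:Fin 6) = 0 ∨ (2:Fin 6)+1 = 0 ∨ (0:Fin 6)+1 = 2)) h
        · exact hne rfl
        · exact (by decide : ¬((2:Fin 6) = 4 ∨ (2:Fin 6)+1 = 4 ∨ (4:Fin 6)+1 = 2)) h
        · exact (by decide : ¬((4:Fin 6) = 0 ∨ (4:Fin 6)+1 = 0 ∨ (0:Fin 6)+1 = 4)) h
        · exact (by decide : ¬((4:Fin 6) = 2 ∨ (4:Fin 6)+1 = 2 ∨ (2:Fin 6)+1 = 4)) h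
        · exact hne rfl
      · have h02 : (⟨0, vx 0⟩ : V') ≠ ⟨2, vx 2⟩ := bu_ne_of_fst (by decide : (0:Fin 6) ≠ 2)
        have h04 : (⟨0, vx 0⟩ : V') ≠ ⟨4, vx 4⟩ := bu_ne_of_fst (by decide : (0:Fin 6) ≠ 4)
        have h24 : (⟨2, vx 2⟩ : V') ≠ ⟨4, vx 4⟩ := bu_ne_of_fst (by decide : (2:Fin 6) ≠ 4)
        rw [Finset.card_insert_of_notMem (by simp [h02, h04]),
          Finset.card_insert_of_notMem (by simp [h24]), Finset.card_singleton]
    have hbdd : BddAbove {k | ∃ s : Finset V', IsIndepFinset G s ∧ s.card = k} :=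
      ⟨3, fun k hk => indep_le k hk⟩
    exact le_antisymm (csSup_le ⟨3, hmem⟩ fun k hk => indep_le k hk) (le_csSup hbdd hmem)
  · -- m-eternal domination number = 2
    set F : Set (Finset V') := {D | ∃ a b : V', b.1 = a.1 + 3 ∧ D = {a, b}} with hF
    have hpair_ne : ∀ a b : V', b.1 = a.1 + 3 → a ≠ b := by
      intro a b hb
      refine bu_ne_of_fst ?_
      rw [hb]; exact (by decide : ∀ i : Fin 6, i ≠ i+3) a.1
    have hfam : IsMEternalGuardFamily G 2 F := by
      refine ⟨⟨{⟨0, vx 0⟩, ⟨3, vx 3⟩}, ⟨0, vx 0⟩, ⟨3, vx 3⟩,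
        (by decide : (3:Fin 6) = 0 + 3), rfl⟩, ?_, ?_⟩
      · rintro D ⟨a, b, hb, rfl⟩
        exact ⟨dom_pair a b hb, Finset.card_pair (hpair_ne a b hb)⟩
      · rintro D ⟨a, b, hb, rfl⟩ r hr
        simp only [Finset.mem_insert, Finset.mem_singleton, not_or] at hr
        have hab : a ≠ b := hpair_ne a b hb
        rcases fin6_cases r.1 a.1 with h|h|h|h|h|h
        · -- r in a's clique: a ↦ r, b stays
          obtain ⟨g, hg, hga, hgb⟩ := bij_pair hab hr.2
          have Pa : g a = a ∨ G.Adj a (g a) := by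
            rw [hga]; exact Or.inr (adj_same (fun e => hr.1 e.symm) h.symm)
          have Pb : g b = b ∨ G.Adj b (g b) := Or.inl hgb
          refine ⟨{r, b}, ⟨r, b, ?_, rfl⟩, by simp, g, hg, guard_move Pa Pb⟩
          show b.1 = r.1 + 3
          rw [hb, h]
        · -- r at a+1: a ↦ r, b ↦ s at a+4
          have hrs : r ≠ (⟨a.1 + 4, vx _⟩ : V') := bu_ne_of_fst (by
            rw [h]; exact (by decide : ∀ i : Fin 6, i+1 ≠ i+4) a.1)
          obtain ⟨g, hg, hga, hgb⟩ := bij_pair hab hrs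
          have Pa : g a = a ∨ G.Adj a (g a) := by
            rw [hga]
            refine Or.inr (adj_mk ?_ (Or.inr (Or.inl h.symm)))
            rw [h]; exact (by decide : ∀ i : Fin 6, i ≠ i+1) a.1
          have Pb : g b = b ∨ G.Adj b (g b) := by
            rw [hgb]
            refine Or.inr (adj_mk ?_ (Or.inr (Or.inl ?_)))
            · rw [hb]; exact (by decide : ∀ i : Fin 6, i+3 ≠ i+4) a.1
            · rw [hb]; exact (by decide : ∀ i : Fin 6, i+3+1 = i+4) a.1
          refine ⟨{r, ⟨a.1 + 4, vx _⟩}, ⟨r, ⟨a.1 + 4, vx _⟩, ?_, rfl⟩, by simp, g, hg,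
            guard_move Pa Pb⟩
          show a.1 + 4 = r.1 + 3
          rw [h]; exact (by decide : ∀ i : Fin 6, i+4 = i+1+3) a.1
        · -- r at a+2: b ↦ r, a ↦ s at a+5
          have hrs : r ≠ (⟨a.1 + 5, vx _⟩ : V') := bu_ne_of_fst (by
            rw [h]; exact (by decide : ∀ i : Fin 6, i+2 ≠ i+5) a.1)
          obtain ⟨g, hg, hgb, hga⟩ := bij_pair hab.symm hrs
          rw [Finset.pair_comm b a] at hg
          have Pa : g a = a ∨ G.Adj a (g a) := by
            rw [hga]
            refine Or.inr (adj_mk ?_ (Or.inr (Or.inr ?_)))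
            · exact (by decide : ∀ i : Fin 6, i ≠ i+5) a.1
            · exact (by decide : ∀ i : Fin 6, i+5+1 = i) a.1
          have Pb : g b = b ∨ G.Adj b (g b) := by
            rw [hgb]
            refine Or.inr (adj_mk ?_ (Or.inr (Or.inr ?_)))
            · rw [hb, h]; exact (by decide : ∀ i : Fin 6, i+3 ≠ i+2) a.1
            · rw [hb, h]; exact (by decide : ∀ i : Fin 6, i+2+1 = i+3) a.1
          refine ⟨{r, ⟨a.1 + 5, vx _⟩}, ⟨r, ⟨a.1 + 5, vx _⟩, ?_, rfl⟩, by simp, g, hg,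
            guard_move Pa Pb⟩
          show a.1 + 5 = r.1 + 3
          rw [h]; exact (by decide : ∀ i : Fin 6, i+5 = i+2+3) a.1
        · -- r in b's clique: b ↦ r, a stays
          obtain ⟨g, hg, hgb, hga⟩ := bij_pair hab.symm hr.1
          rw [Finset.pair_comm b a] at hg
          have Pa : g a = a ∨ G.Adj a (g a) := Or.inl hga
          have Pb : g b = b ∨ G.Adj b (g b) := by
            rw [hgb]; exact Or.inr (adj_same (fun e => hr.2 e.symm) (hb.trans h.symm))
          refine ⟨{r, a}, ⟨r, a, ?_, rfl⟩, by simp, g, hg, guard_move Pa Pb⟩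
          show a.1 = r.1 + 3
          rw [h]; exact (by decide : ∀ i : Fin 6, i = i+3+3) a.1
        · -- r at a+4: b ↦ r, a ↦ s at a+1
          have hrs : r ≠ (⟨a.1 + 1, vx _⟩ : V') := bu_ne_of_fst (by
            rw [h]; exact (by decide : ∀ i : Fin 6, i+4 ≠ i+1) a.1)
          obtain ⟨g, hg, hgb, hga⟩ := bij_pair hab.symm hrs
          rw [Finset.pair_comm b a] at hg
          have Pa : g a = a ∨ G.Adj a (g a) := by
            rw [hga]
            refine Or.inr (adj_mk ?_ (Or.inr (Or.inl rfl)))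
            exact (by decide : ∀ i : Fin 6, i ≠ i+1) a.1
          have Pb : g b = b ∨ G.Adj b (g b) := by
            rw [hgb]
            refine Or.inr (adj_mk ?_ (Or.inr (Or.inl ?_)))
            · rw [hb, h]; exact (by decide : ∀ i : Fin 6, i+3 ≠ i+4) a.1
            · rw [hb, h]; exact (by decide : ∀ i : Fin 6, i+3+1 = i+4) a.1
          refine ⟨{r, ⟨a.1 + 1, vx _⟩}, ⟨r, ⟨a.1 + 1, vx _⟩, ?_, rfl⟩, by simp, g, hg,
            guard_move Pa Pb⟩
          show a.1 + 1 = r.1 + 3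
          rw [h]; exact (by decide : ∀ i : Fin 6, i+1 = i+4+3) a.1
        · -- r at a+5: a ↦ r, b ↦ s at a+2
          have hrs : r ≠ (⟨a.1 + 2, vx _⟩ : V') := bu_ne_of_fst (by
            rw [h]; exact (by decide : ∀ i : Fin 6, i+5 ≠ i+2) a.1)
          obtain ⟨g, hg, hga, hgb⟩ := bij_pair hab hrs
          have Pa : g a = a ∨ G.Adj a (g a) := by
            rw [hga]
            refine Or.inr (adj_mk ?_ (Or.inr (Or.inr ?_)))
            · rw [h]; exact (by decide : ∀ i : Fin 6, i ≠ i+5) a.1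
            · rw [h]; exact (by decide : ∀ i : Fin 6, i+5+1 = i) a.1
          have Pb : g b = b ∨ G.Adj b (g b) := by
            rw [hgb]
            refine Or.inr (adj_mk ?_ (Or.inr (Or.inr ?_)))
            · rw [hb]; exact (by decide : ∀ i : Fin 6, i+3 ≠ i+2) a.1
            · rw [hb]; exact (by decide : ∀ i : Fin 6, i+2+1 = i+3) a.1
          refine ⟨{r, ⟨a.1 + 2, vx _⟩}, ⟨r, ⟨a.1 + 2, vx _⟩, ?_, rfl⟩, by simp, g, hg,
            guard_move Pa Pb⟩
          show a.1 + 2 = r.1 + 3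
          rw [h]; exact (by decide : ∀ i : Fin 6, i+2 = i+5+3) a.1
    have h2mem : (2 : ℕ) ∈ {k | 1 ≤ k ∧ ∃ F : Set (Finset V'), IsMEternalGuardFamily G k F} :=
      ⟨by norm_num, F, hfam⟩
    have hlb : ∀ k ∈ {k | 1 ≤ k ∧ ∃ F : Set (Finset V'), IsMEternalGuardFamily G k F},
        2 ≤ k := by
      rintro k ⟨hk1, F', hne', hdom', -⟩
      by_contra hlt
      have hk : k = 1 := by omega
      subst hk
      obtain ⟨D, hD⟩ := hne'
      obtain ⟨hDdom, hDcard⟩ := hdom' D hD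
      obtain ⟨a, rfl⟩ := Finset.card_eq_one.mp hDcard
      have hwa : (⟨a.1 + 3, vx _⟩ : V') ∉ ({a} : Finset V') := by
        simp only [Finset.mem_singleton]
        exact fun e => bu_ne_of_fst ((by decide : ∀ i : Fin 6, i+3 ≠ i) a.1) e
      obtain ⟨u, hu, hadj⟩ := hDdom _ hwa
      simp only [Finset.mem_singleton] at hu
      rw [hu] at hadj
      obtain ⟨-, h | h | h⟩ := hadj
      · exact (by decide : ∀ i : Fin 6, i ≠ i+3) a.1 h
      · exact (by decide : ∀ i : Fin 6, i+1 ≠ i+3) a.1 h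
      · exact (by decide : ∀ i : Fin 6, i+3+1 ≠ i) a.1 h
    exact le_antisymm (Nat.sInf_le h2mem) (le_csInf ⟨2, h2mem⟩ hlb)
end

section
/- Let G be a finite bipartite simple graph without isolated vertices, and let n = |V(G)|. Then γ(G) = γ^∞(G) if and only if γ(G) = n/2 (equivalently, 2·γ(G) = n). -/
variable {V : Type*}

/- ========= auxiliary machinery ========= -/

/-- `f` is a fixed-point-free involution on the finset `M` matching adjacent vertices. -/
def IsMatchingOn (G : SimpleGraph V) (M : Finset V) (f : V → V) : Prop :=
  ∀ v ∈ M, f v ∈ M ∧ f (f v) = v ∧ f v ≠ v ∧ G.Adj v (f v)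

/-- A set containing exactly one endpoint of every matching pair has half the size. -/
lemma pair_count [DecidableEq V] {f : V → V} {M D : Finset V}
    (hinv : ∀ v ∈ M, f v ∈ M ∧ f (f v) = v) (hD : D ⊆ M)
    (hQ : ∀ v ∈ M, (v ∈ D ↔ f v ∉ D)) : 2 * D.card = M.card := by
  have hcard : (M \ D).card + D.card = M.card := Finset.card_sdiff_add_card_eq_card hD
  have hbij : D.card = (M \ D).card := by
    apply Finset.card_bij (fun a _ => f a)
    · intro a ha
      obtain ⟨h1, _⟩ := hinv a (hD ha)
      exact Finset.mem_sdiff.mpr ⟨h1, (hQ a (hD ha)).mp ha⟩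
    · intro a ha b hb hab
      have h1 := (hinv a (hD ha)).2
      rw [← h1, hab, (hinv b (hD hb)).2]
    · intro c hc
      rw [Finset.mem_sdiff] at hc
      have h2 : f c ∈ D := by
        by_contra h3
        exact hc.2 ((hQ c hc.1).mpr h3)
      exact ⟨f c, h2, (hinv c hc.1).2⟩
  omega

/-- A bipartite graph has an independent set covering at least half the vertices. -/
lemma exists_big_indep [Fintype V] (G : SimpleGraph V) (hbip : G.Colorable 2) :
    ∃ S : Finset V, IsIndepFinset G S ∧ Fintype.card V ≤ 2 * S.card := by
  classical
  obtain ⟨c⟩ := hbip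
  have hsum : (Finset.univ.filter (fun v => c v = 0)).card
      + (Finset.univ.filter (fun v => ¬ (c v = 0))).card = Fintype.card V := by
    rw [Finset.card_filter_add_card_filter_not, Finset.card_univ]
  rcases le_total (Finset.univ.filter (fun v => ¬ (c v = 0))).card
      (Finset.univ.filter (fun v => c v = 0)).card with h | h
  · refine ⟨Finset.univ.filter (fun v => c v = 0), ?_, by omega⟩
    intro a ha b hb _ hadj
    rw [Finset.mem_filter] at ha hb
    exact c.valid hadj (ha.2.trans hb.2.symm)
  · refine ⟨Finset.univ.filter (fun v => ¬ (c v = 0)), ?_, by omega⟩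
    intro a ha b hb _ hadj
    rw [Finset.mem_filter] at ha hb
    have h1 : c a = 1 := by omega
    have h2 : c b = 1 := by omega
    exact c.valid hadj (h1.trans h2.symm)

/-- Attacking the vertices of an independent set one by one forces an eternal guard
family to occupy it entirely, hence `|S| ≤ k`. -/
lemma indep_card_le_eternal [Fintype V] [DecidableEq V] {G : SimpleGraph V} {S : Finset V}
    (hS : IsIndepFinset G S) {k : ℕ} {F : Set (Finset V)}
    (hF : IsEternalGuardFamily G k F) : S.card ≤ k := by
  obtain ⟨⟨D0, hD0⟩, hdom, hmove⟩ := hF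
  suffices h : ∀ n (D : Finset V), D ∈ F → (S \ D).card ≤ n → ∃ D' ∈ F, S ⊆ D' by
    obtain ⟨D', hD', hsub⟩ := h (S \ D0).card D0 hD0 le_rfl
    calc S.card ≤ D'.card := Finset.card_le_card hsub
      _ = k := (hdom D' hD').2
  intro n
  induction n with
  | zero =>
    intro D hD hle
    have hempty : S \ D = ∅ := Finset.card_eq_zero.mp (Nat.le_zero.mp hle)
    refine ⟨D, hD, fun x hx => ?_⟩
    by_contra hxD
    have hmem : x ∈ S \ D := Finset.mem_sdiff.mpr ⟨hx, hxD⟩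
    rw [hempty] at hmem
    exact absurd hmem (Finset.notMem_empty x)
  | succ n ih =>
    intro D hD hle
    by_cases hsub : S ⊆ D
    · exact ⟨D, hD, hsub⟩
    · obtain ⟨r, hrS, hrD⟩ := Finset.not_subset.mp hsub
      obtain ⟨v, hvD, hadj, hD'⟩ := hmove D hD r hrD
      apply ih _ hD'
      have hsub2 : S \ insert r (D.erase v) ⊆ (S \ D).erase r := by
        intro x hx
        rw [Finset.mem_sdiff] at hx
        rw [Finset.mem_erase, Finset.mem_sdiff]
        have hxr : x ≠ r := fun h => hx.2 (by rw [h]; exact Finset.mem_insert_self r _)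
        refine ⟨hxr, hx.1, fun hxD => ?_⟩
        have hxv : x ≠ v := by
          rintro rfl
          exact hS x hx.1 r hrS (fun h => hrD (h ▸ hvD)) hadj
        exact hx.2 (Finset.mem_insert_of_mem (Finset.mem_erase.mpr ⟨hxv, hxD⟩))
      have h1 : ((S \ D).erase r).card = (S \ D).card - 1 :=
        Finset.card_erase_of_mem (Finset.mem_sdiff.mpr ⟨hrS, hrD⟩)
      have h2 := Finset.card_le_card hsub2
      omega

/-- A maximum matching in a graph without isolated vertices yields a dominating set of
half its size; hence `2γ(G) ≤ |M|`. -/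
lemma exists_max_matching [Fintype V] [DecidableEq V] (G : SimpleGraph V)
    (hiso : ∀ v : V, ∃ u, G.Adj u v) :
    ∃ (M : Finset V) (f : V → V), IsMatchingOn G M f ∧ 2 * domNum G ≤ M.card := by
  classical
  set N : Set ℕ := {n | ∃ M : Finset V, ∃ f : V → V, IsMatchingOn G M f ∧ M.card = n}
    with hN
  have hne : N.Nonempty :=
    ⟨0, ∅, id, fun v hv => absurd hv (Finset.notMem_empty v), rfl⟩
  have hbdd : BddAbove N := by
    refine ⟨Fintype.card V, ?_⟩
    rintro n ⟨M, f, _, rfl⟩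
    exact (Finset.card_le_univ M).trans (le_of_eq Finset.card_univ)
  obtain ⟨M, f, hMf, hMcard⟩ := Nat.sSup_mem hne hbdd
  have hmax : ∀ (M' : Finset V) (f' : V → V), IsMatchingOn G M' f' → M'.card ≤ M.card := by
    intro M' f' h
    rw [hMcard]
    exact le_csSup hbdd ⟨M', f', h, rfl⟩
  refine ⟨M, f, hMf, ?_⟩
  -- the unmatched vertices form an independent set
  have hindep : ∀ u w, u ∉ M → w ∉ M → ¬ G.Adj u w := by
    intro u w hu hw hadj
    have huw : u ≠ w := hadj.ne
    set f' : V → V := fun x => if x = u then w else if x = w then u else f x with hf'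
    have hfu : f' u = w := by simp [hf']
    have hfw : f' w = u := by simp [hf', huw.symm]
    have h' : IsMatchingOn G (insert u (insert w M)) f' := by
      intro v hv
      simp only [Finset.mem_insert] at hv
      rcases hv with rfl | rfl | hv
      · refine ⟨?_, ?_, ?_, ?_⟩
        · rw [hfu]; exact Finset.mem_insert_of_mem (Finset.mem_insert_self w M)
        · rw [hfu, hfw]
        · rw [hfu]; exact huw.symm
        · rw [hfu]; exact hadj
      · refine ⟨?_, ?_, ?_, ?_⟩
        · rw [hfw]; exact Finset.mem_insert_self u _
        · rw [hfw, hfu]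
        · rw [hfw]; exact huw
        · rw [hfw]; exact hadj.symm
      · have hvu : v ≠ u := fun h => hu (h ▸ hv)
        have hvw : v ≠ w := fun h => hw (h ▸ hv)
        obtain ⟨h1, h2, h3, h4⟩ := hMf v hv
        have hfvu : f v ≠ u := fun h => hu (h ▸ h1)
        have hfvw : f v ≠ w := fun h => hw (h ▸ h1)
        have he1 : f' v = f v := by simp [hf', hvu, hvw]
        have he2 : f' (f v) = f (f v) := by simp [hf', hfvu, hfvw]
        refine ⟨?_, ?_, ?_, ?_⟩
        · rw [he1]; exact Finset.mem_insert_of_mem (Finset.mem_insert_of_mem h1)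
        · rw [he1, he2, h2]
        · rw [he1]; exact h3
        · rw [he1]; exact h4
    have hc := hmax _ _ h'
    have hcard : (insert u (insert w M)).card = M.card + 2 := by
      rw [Finset.card_insert_of_notMem (by simp [Finset.mem_insert, huw, hu]),
        Finset.card_insert_of_notMem hw]
    omega
  -- no augmenting path of length three
  have h3aug : ∀ a ∈ M, ∀ u w, u ∉ M → w ∉ M → G.Adj a u → G.Adj (f a) w → u = w := by
    intro a haM u w hu hw hau hbw
    by_contra huw
    obtain ⟨hbM, hfb, hbne, hab⟩ := hMf a haM
    have hune : u ≠ a := fun h => hu (h ▸ haM)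
    have hunb : u ≠ f a := fun h => hu (h ▸ hbM)
    have hwna : w ≠ a := fun h => hw (h ▸ haM)
    have hwnb : w ≠ f a := fun h => hw (h ▸ hbM)
    set f' : V → V := fun x =>
      if x = u then a else if x = a then u else if x = w then f a else if x = f a then w
        else f x with hf'
    have hgu : f' u = a := by simp [hf']
    have hga : f' a = u := by simp [hf', hune.symm]
    have hgw : f' w = f a := by simp [hf', Ne.symm huw, hwna]
    have hgb : f' (f a) = w := by simp [hf', hunb.symm, hbne, hwnb.symm]
    have h' : IsMatchingOn G (insert u (insert w M)) f' := by
      intro v hv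
      simp only [Finset.mem_insert] at hv
      rcases hv with rfl | rfl | hv
      · refine ⟨?_, ?_, ?_, ?_⟩
        · rw [hgu]; exact Finset.mem_insert_of_mem (Finset.mem_insert_of_mem haM)
        · rw [hgu, hga]
        · rw [hgu]; exact hune.symm
        · rw [hgu]; exact hau.symm
      · refine ⟨?_, ?_, ?_, ?_⟩
        · rw [hgw]; exact Finset.mem_insert_of_mem (Finset.mem_insert_of_mem hbM)
        · rw [hgw, hgb]
        · rw [hgw]; exact hwnb.symm
        · rw [hgw]; exact hbw.symm
      · by_cases hva : v = a
        · subst hva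
          refine ⟨?_, ?_, ?_, ?_⟩
          · rw [hga]; exact Finset.mem_insert_self u _
          · rw [hga, hgu]
          · rw [hga]; exact hune
          · rw [hga]; exact hau
        · by_cases hvb : v = f a
          · subst hvb
            refine ⟨?_, ?_, ?_, ?_⟩
            · rw [hgb]; exact Finset.mem_insert_of_mem (Finset.mem_insert_self w M)
            · rw [hgb, hgw]
            · rw [hgb]; exact hwnb
            · rw [hgb]; exact hbw
          · have hvu : v ≠ u := fun h => hu (h ▸ hv)
            have hvw : v ≠ w := fun h => hw (h ▸ hv)
            obtain ⟨h1, h2, h3, h4⟩ := hMf v hv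
            have hfvu : f v ≠ u := fun h => hu (h ▸ h1)
            have hfvw : f v ≠ w := fun h => hw (h ▸ h1)
            have hfva : f v ≠ a := by
              intro h
              exact hvb (by rw [← h, h2])
            have hfvb : f v ≠ f a := by
              intro h
              apply hva
              rw [← hfb, ← h, h2]
            have he1 : f' v = f v := by simp [hf', hvu, hva, hvw, hvb]
            have he2 : f' (f v) = f (f v) := by simp [hf', hfvu, hfva, hfvw, hfvb]
            refine ⟨?_, ?_, ?_, ?_⟩
            · rw [he1]; exact Finset.mem_insert_of_mem (Finset.mem_insert_of_mem h1)
            · rw [he1, he2, h2]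
            · rw [he1]; exact h3
            · rw [he1]; exact h4
    have hc := hmax _ _ h'
    have hcard : (insert u (insert w M)).card = M.card + 2 := by
      rw [Finset.card_insert_of_notMem (by simp [Finset.mem_insert, huw, hu]),
        Finset.card_insert_of_notMem hw]
    omega
  -- build the half-size dominating set
  have e := Fintype.equivFin V
  set P : V → Prop := fun v => ∃ u, u ∉ M ∧ G.Adj v u with hP
  set Q : V → Prop := fun v =>
    (P v ∧ (¬ P (f v) ∨ e v < e (f v))) ∨ (¬ P v ∧ ¬ P (f v) ∧ e v < e (f v)) with hQdef
  set D : Finset V := M.filter Q with hD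
  have hmemD : ∀ v, v ∈ D ↔ v ∈ M ∧ Q v := by
    intro v; rw [hD, Finset.mem_filter]
  have hxor : ∀ v ∈ M, (Q v ↔ ¬ Q (f v)) := by
    intro v hv
    obtain ⟨h1, h2, h3, _⟩ := hMf v hv
    have hne : e v ≠ e (f v) := fun h => h3 (e.injective h).symm
    simp only [hQdef, h2]
    rcases lt_or_gt_of_ne hne with h | h
    · have h' : ¬ e (f v) < e v := lt_asymm h
      by_cases p1 : P v <;> by_cases p2 : P (f v) <;> simp [p1, p2, h, h']
    · have hh : e (f v) < e v := h
      have h' : ¬ e v < e (f v) := lt_asymm hh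
      by_cases p1 : P v <;> by_cases p2 : P (f v) <;> simp [p1, p2, hh, h']
  have hQmem : ∀ v ∈ M, (v ∈ D ↔ f v ∉ D) := by
    intro v hv
    have h1 := (hMf v hv).1
    rw [hmemD, hmemD]
    constructor
    · rintro ⟨_, hq⟩ ⟨_, hq'⟩
      exact ((hxor v hv).mp hq) hq'
    · intro h
      refine ⟨hv, (hxor v hv).mpr fun hq' => h ⟨h1, hq'⟩⟩
  have hdomD : Dominates G D := by
    intro v hvD
    by_cases hvM : v ∈ M
    · have hQv : ¬ Q v := fun hq => hvD ((hmemD v).mpr ⟨hvM, hq⟩)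
      have hQfv : Q (f v) := by
        by_contra hq
        exact hQv ((hxor v hvM).mpr hq)
      obtain ⟨h1, _, _, h4⟩ := hMf v hvM
      exact ⟨f v, (hmemD (f v)).mpr ⟨h1, hQfv⟩, h4.symm⟩
    · obtain ⟨z, hz⟩ := hiso v
      have hzM : z ∈ M := by
        by_contra hzM
        exact hindep z v hzM hvM hz
      have hPz : P z := by
        simp only [hP]
        exact ⟨v, hvM, hz⟩
      by_cases hQz : Q z
      · exact ⟨z, (hmemD z).mpr ⟨hzM, hQz⟩, hz⟩
      · have hQfz : Q (f z) := by
          by_contra hq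
          exact hQz ((hxor z hzM).mpr hq)
        obtain ⟨h1, h2, h3, h4⟩ := hMf z hzM
        have hPfz : P (f z) := by
          simp only [hQdef] at hQfz
          rcases hQfz with ⟨hp, _⟩ | ⟨_, hnp, _⟩
          · exact hp
          · rw [h2] at hnp
            exact absurd hPz hnp
        have hPfz' : ∃ u, u ∉ M ∧ G.Adj (f z) u := by
          simpa only [hP] using hPfz
        obtain ⟨w, hwM, hadjw⟩ := hPfz'
        have hvw : v = w := h3aug z hzM v w hvM hwM hz hadjw
        refine ⟨f z, (hmemD (f z)).mpr ⟨h1, hQfz⟩, ?_⟩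
        rw [hvw]
        exact hadjw
  have hcount : 2 * D.card = M.card :=
    pair_count (fun v hv => ⟨(hMf v hv).1, (hMf v hv).2.1⟩)
      (by rw [hD]; exact Finset.filter_subset _ _) hQmem
  have hdle : domNum G ≤ D.card := Nat.sInf_le ⟨D, hdomD, rfl⟩
  omega

/-- The transversals of a perfect matching form an eternal guard family of size `n/2`. -/
lemma eternal_of_pm [Fintype V] [DecidableEq V] (G : SimpleGraph V) (f : V → V)
    (hf : ∀ v, f (f v) = v ∧ f v ≠ v ∧ G.Adj v (f v))
    (hn : 2 * domNum G = Fintype.card V) :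
    IsEternalGuardFamily G (domNum G) {D : Finset V | ∀ v, v ∈ D ↔ f v ∉ D} := by
  classical
  have hcardmem : ∀ D : Finset V, (∀ v, v ∈ D ↔ f v ∉ D) → D.card = domNum G := by
    intro D hD
    have h := pair_count (M := Finset.univ) (f := f)
      (fun v _ => ⟨Finset.mem_univ _, (hf v).1⟩) (Finset.subset_univ D)
      (fun v _ => hD v)
    rw [Finset.card_univ] at h
    omega
  have hdomm : ∀ D : Finset V, (∀ v, v ∈ D ↔ f v ∉ D) → Dominates G D := by
    intro D hD v hv
    have hfv : f v ∈ D := by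
      by_contra h
      exact hv ((hD v).mpr h)
    exact ⟨f v, hfv, ((hf v).2.2).symm⟩
  refine ⟨?_, ?_, ?_⟩
  · -- nonempty: a tie-break transversal
    have e := Fintype.equivFin V
    refine ⟨Finset.univ.filter (fun v => e v < e (f v)), ?_⟩
    simp only [Set.mem_setOf_eq]
    intro v
    simp only [Finset.mem_filter, Finset.mem_univ, true_and]
    obtain ⟨h1, h2, _⟩ := hf v
    have hne : e (f v) ≠ e v := fun h => h2 (e.injective h)
    rw [h1]
    exact ⟨fun h h' => absurd h' (lt_asymm h),
      fun h => (lt_or_gt_of_ne hne).resolve_left h⟩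
  · intro D hD
    simp only [Set.mem_setOf_eq] at hD
    exact ⟨hdomm D hD, hcardmem D hD⟩
  · intro D hD r hr
    simp only [Set.mem_setOf_eq] at hD
    obtain ⟨hfr1, hfr2, hfr3⟩ := hf r
    have hfrD : f r ∈ D := by
      by_contra h
      exact hr ((hD r).mpr h)
    refine ⟨f r, hfrD, hfr3.symm, ?_⟩
    simp only [Set.mem_setOf_eq]
    have hinj : ∀ a b, f a = f b → a = b := by
      intro a b hab
      rw [← (hf a).1, hab, (hf b).1]
    intro x
    by_cases hx1 : x = r
    · subst hx1
      simp only [Finset.mem_insert, Finset.mem_erase]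
      constructor
      · rintro _ (h | ⟨h, _⟩)
        · exact hfr2 h
        · exact h rfl
      · intro _
        exact Or.inl trivial
    · by_cases hx2 : x = f r
      · subst hx2
        simp only [Finset.mem_insert, Finset.mem_erase, hfr1]
        constructor
        · rintro (h | ⟨h, _⟩)
          · exact absurd h hfr2
          · exact absurd rfl h
        · intro h
          exact absurd (Or.inl trivial) h
      · have hfx1 : f x ≠ r := by
          intro h
          apply hx2
          rw [← (hf x).1, h]
        have hfx2 : f x ≠ f r := fun h => hx1 (hinj _ _ h)
        simp only [Finset.mem_insert, Finset.mem_erase]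
        constructor
        · rintro (h | ⟨_, hxD⟩)
          · exact absurd h hx1
          · rintro (h | ⟨_, hfxD⟩)
            · exact hfx1 h
            · exact ((hD x).mp hxD) hfxD
        · intro h
          right
          refine ⟨hx2, ?_⟩
          by_contra hxD
          have hfxD : f x ∈ D := by
            by_contra h2
            exact hxD ((hD x).mpr h2)
          exact h (Or.inr ⟨hfx2, hfxD⟩)

/-- for a bipartite graph `G` without isolated vertices on `n` vertices,
`γ(G) = γ^∞(G)` if and only if `γ(G) = n/2` (i.e. `2·γ(G) = n`). -/
theorem stmt7 [Fintype V] [DecidableEq V] (G : SimpleGraph V)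
    (hbip : G.Colorable 2) (hiso : ∀ v : V, ∃ u, G.Adj u v) :
    domNum G = eternalDomNum G ↔ 2 * domNum G = Fintype.card V := by
  classical
  rcases isEmpty_or_nonempty V with hV | hV
  · have hγ : domNum G = 0 := by
      have h0 : (0:ℕ) ∈ {k | ∃ D : Finset V, Dominates G D ∧ D.card = k} :=
        ⟨∅, fun v _ => (IsEmpty.false v).elim, rfl⟩
      exact Nat.eq_zero_of_le_zero (Nat.sInf_le h0)
    have hc : Fintype.card V = 0 := Fintype.card_eq_zero
    have he : eternalDomNum G = 0 := by
      have hemp : {k | 1 ≤ k ∧ ∃ F : Set (Finset V), IsEternalGuardFamily G k F} = ∅ := by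
        ext k
        simp only [Set.mem_setOf_eq, Set.mem_empty_iff_false, iff_false]
        rintro ⟨hk, F, ⟨D, hDF⟩, hdom, _⟩
        have h1 := (hdom D hDF).2
        have h2 : D.card ≤ Fintype.card V := (Finset.card_le_univ D).trans_eq Finset.card_univ
        omega
      rw [eternalDomNum, hemp, Nat.sInf_empty]
    rw [hγ, he, hc]
  · have hdomne : {k | ∃ D : Finset V, Dominates G D ∧ D.card = k}.Nonempty :=
      ⟨Fintype.card V, Finset.univ, fun v hv => absurd (Finset.mem_univ v) hv,
        Finset.card_univ⟩
    have hγmem : ∃ D : Finset V, Dominates G D ∧ D.card = domNum G := Nat.sInf_mem hdomne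
    have hγpos : 1 ≤ domNum G := by
      by_contra hcon
      have h0 : domNum G = 0 := by omega
      obtain ⟨D, hdom, hcard⟩ := hγmem
      have hDe : D = ∅ := Finset.card_eq_zero.mp (by omega)
      obtain ⟨v⟩ := hV
      obtain ⟨u, hu, _⟩ := hdom v (by rw [hDe]; exact Finset.notMem_empty v)
      rw [hDe] at hu
      exact absurd hu (Finset.notMem_empty u)
    obtain ⟨M, f, hMf, hle⟩ := exists_max_matching G hiso
    have hMn : M.card ≤ Fintype.card V := (Finset.card_le_univ M).trans_eq Finset.card_univ
    constructor
    · intro heq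
      obtain ⟨S, hSind, hScard⟩ := exists_big_indep G hbip
      have hEne : {k | 1 ≤ k ∧ ∃ F : Set (Finset V), IsEternalGuardFamily G k F}.Nonempty := by
        by_contra hcon
        rw [Set.not_nonempty_iff_eq_empty] at hcon
        have h0 : eternalDomNum G = 0 := by rw [eternalDomNum, hcon, Nat.sInf_empty]
        omega
      have hEmem : 1 ≤ eternalDomNum G ∧
          ∃ F : Set (Finset V), IsEternalGuardFamily G (eternalDomNum G) F :=
        Nat.sInf_mem hEne
      obtain ⟨_, F, hF⟩ := hEmem
      have hSk := indep_card_le_eternal hSind hF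
      omega
    · intro h2γ
      have hMuniv : M = Finset.univ := Finset.eq_univ_of_card M (by omega)
      have hpm : ∀ v, f (f v) = v ∧ f v ≠ v ∧ G.Adj v (f v) := by
        intro v
        have h := hMf v (by rw [hMuniv]; exact Finset.mem_univ v)
        exact ⟨h.2.1, h.2.2.1, h.2.2.2⟩
      have hfam := eternal_of_pm G f hpm h2γ
      have hle1 : eternalDomNum G ≤ domNum G :=
        Nat.sInf_le ⟨hγpos, _, hfam⟩
      have hge : domNum G ≤ eternalDomNum G := by
        have hEne : ({k | 1 ≤ k ∧ ∃ F : Set (Finset V),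
            IsEternalGuardFamily G k F}).Nonempty := ⟨domNum G, hγpos, _, hfam⟩
        have hEmem : 1 ≤ eternalDomNum G ∧
            ∃ F : Set (Finset V), IsEternalGuardFamily G (eternalDomNum G) F :=
          Nat.sInf_mem hEne
        obtain ⟨_, F, ⟨D, hDF⟩, hdom, _⟩ := hEmem
        exact Nat.sInf_le ⟨D, (hdom D hDF).1, (hdom D hDF).2⟩
      omega
end

section
/- Let G be a finite simple graph without isolated vertices such that γ(G) = γ^∞(G) and every vertex of G has degree at most 3. Then there exists an eternal guard family F of size γ^∞(G) in G and a set D ∈ F such that the external private neighborhood epn(v,D) is nonempty for every v ∈ D. -/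
variable {V : Type*}

/-- The external private neighborhood of `v ∈ D` with respect to `D`: the neighbors of
`v` lying outside the closed neighborhood of `D \ {v}`. -/
def epn [DecidableEq V] (G : SimpleGraph V) (v : V) (D : Finset V) : Set V :=
  {u | G.Adj v u ∧ ∀ w ∈ D.erase v, u ≠ w ∧ ¬ G.Adj w u}

section Aux

set_option linter.unusedSectionVars false
set_option linter.unusedVariables false

variable [Fintype V] [DecidableEq V] (G : SimpleGraph V)

lemma my_mem_epn {y v : V} {D : Finset V} :
    y ∈ epn G v D ↔ G.Adj v y ∧ ∀ w ∈ D.erase v, y ≠ w ∧ ¬ G.Adj w y := Iff.rfl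

open scoped Classical in
noncomputable def badF (E : Finset V) : Finset V :=
  E.filter (fun w => epn G w E = ∅)

open scoped Classical in
noncomputable def isoF (E : Finset V) : Finset V :=
  E.filter (fun w => ∀ y ∈ E, ¬ G.Adj w y)

noncomputable def Phi (E : Finset V) : ℕ :=
  (badF G E).card * (Fintype.card V + 1) + (isoF G E).card

open scoped Classical in
lemma my_mem_badF {w : V} {E : Finset V} :
    w ∈ badF G E ↔ w ∈ E ∧ epn G w E = ∅ := by
  simp [badF]

open scoped Classical in
lemma my_mem_isoF {w : V} {E : Finset V} :
    w ∈ isoF G E ↔ w ∈ E ∧ ∀ y ∈ E, ¬ G.Adj w y := by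
  simp [isoF]

lemma my_domNum_le {D : Finset V} (hD : Dominates G D) : domNum G ≤ D.card :=
  Nat.sInf_le ⟨D, hD, rfl⟩

lemma my_fact2 {D : Finset V} (hD : Dominates G D) (hc : D.card = domNum G)
    {v w : V} (hv : v ∈ D) (hw : w ∈ D) (hvw : v ≠ w) (hadj : G.Adj v w) :
    (epn G v D).Nonempty := by
  rw [Set.nonempty_iff_ne_empty]
  intro hbad
  have hdom : Dominates G (D.erase v) := by
    intro y hy
    by_cases hyv : y = v
    · exact ⟨w, Finset.mem_erase.mpr ⟨hvw.symm, hw⟩, by rw [hyv]; exact hadj.symm⟩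
    · have hyD : y ∉ D := fun hyD => hy (Finset.mem_erase.mpr ⟨hyv, hyD⟩)
      obtain ⟨t, htD, hty⟩ := hD y hyD
      by_cases htv : t = v
      · by_contra hno
        push_neg at hno
        have hyepn : y ∈ epn G v D := by
          rw [my_mem_epn]
          refine ⟨htv ▸ hty, fun w' hw' => ⟨?_, ?_⟩⟩
          · rintro rfl; exact hyD (Finset.mem_of_mem_erase hw')
          · intro ha; exact hno w' hw' ha
        rw [hbad] at hyepn
        exact hyepn
      · exact ⟨t, Finset.mem_erase.mpr ⟨htv, htD⟩, hty⟩
  have hle := my_domNum_le G hdom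
  rw [Finset.card_erase_of_mem hv] at hle
  have hpos : 0 < D.card := Finset.card_pos.mpr ⟨v, hv⟩
  omega

lemma my_bad_no_nbr {D : Finset V} (hD : Dominates G D) (hc : D.card = domNum G)
    {v : V} (hv : v ∈ D) (hbad : epn G v D = ∅) :
    ∀ w ∈ D, ¬ G.Adj v w := by
  intro w hw hadj
  have hvw : v ≠ w := fun h => G.irrefl (h ▸ hadj)
  have := my_fact2 G hD hc hv hw hvw hadj
  rw [hbad] at this
  exact Set.not_nonempty_empty this

lemma my_owner_unique {D : Finset V} {a b x : V} (ha : a ∈ D) (hb : b ∈ D)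
    (hxa : x ∈ epn G a D) (hxb : x ∈ epn G b D) : a = b := by
  by_contra hab
  have hbe : b ∈ D.erase a := Finset.mem_erase.mpr ⟨fun h => hab h.symm, hb⟩
  exact ((my_mem_epn G).mp hxa).2 b hbe |>.2 ((my_mem_epn G).mp hxb).1

/-- THE CORE LEMMA: attacking any neighbour of a bad vertex of a minimum dominating
set strictly decreases the potential `Phi`, whatever the (dominating) response. -/
lemma my_core [DecidableRel G.Adj] (hΔ : ∀ x : V, G.degree x ≤ 3)
    {D : Finset V} (hD : Dominates G D) (hc : D.card = domNum G)
    {v : V} (hv : v ∈ D) (hbad : epn G v D = ∅) {r : V} (hr : G.Adj v r) :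
    r ∉ D ∧ ∀ u ∈ D, G.Adj u r → Dominates G (insert r (D.erase u)) →
      Phi G (insert r (D.erase u)) < Phi G D := by
  classical
  have hnbrD : ∀ w ∈ D, ¬ G.Adj v w := my_bad_no_nbr G hD hc hv hbad
  have hrD : r ∉ D := fun h => hnbrD r h hr
  -- codominator d
  have hcod : ∃ d ∈ D, d ≠ v ∧ G.Adj d r := by
    by_contra hno
    push_neg at hno
    have hrepn : r ∈ epn G v D := by
      rw [my_mem_epn]
      refine ⟨hr, fun w hw => ⟨?_, ?_⟩⟩
      · rintro rfl; exact hrD (Finset.mem_of_mem_erase hw)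
      · exact hno w (Finset.mem_of_mem_erase hw) (Finset.mem_erase.mp hw).1
    rw [hbad] at hrepn
    exact hrepn
  obtain ⟨d, hdD, hdv, hdr⟩ := hcod
  -- the escape set X
  set X : Finset V := (G.neighborFinset r) \ (insert v D) with hXdef
  have hXcard : X.card ≤ 1 := by
    have hsub : X ⊆ ((G.neighborFinset r).erase v).erase d := by
      intro x hx
      obtain ⟨hx1, hx2⟩ := Finset.mem_sdiff.mp hx
      refine Finset.mem_erase.mpr ⟨?_, Finset.mem_erase.mpr ⟨?_, hx1⟩⟩
      · rintro rfl; exact hx2 (Finset.mem_insert_of_mem hdD)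
      · rintro rfl; exact hx2 (Finset.mem_insert_self _ _)
    have h1 : v ∈ G.neighborFinset r := by
      rw [SimpleGraph.mem_neighborFinset]; exact hr.symm
    have h2 : d ∈ (G.neighborFinset r).erase v := by
      refine Finset.mem_erase.mpr ⟨hdv, ?_⟩
      rw [SimpleGraph.mem_neighborFinset]; exact hdr.symm
    have hdeg : (G.neighborFinset r).card ≤ 3 := by
      rw [SimpleGraph.card_neighborFinset_eq_degree]
      exact hΔ r
    calc X.card ≤ (((G.neighborFinset r).erase v).erase d).card :=
          Finset.card_le_card hsub
      _ = (G.neighborFinset r).card - 1 - 1 := by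
          rw [Finset.card_erase_of_mem h2, Finset.card_erase_of_mem h1]
      _ ≤ 1 := by omega
  refine ⟨hrD, ?_⟩
  intro u huD hur hdom'
  set D' : Finset V := insert r (D.erase u) with hD'def
  have hrDe : r ∉ D.erase u := fun h => hrD (Finset.mem_of_mem_erase h)
  have hcard' : D'.card = domNum G := by
    rw [hD'def, Finset.card_insert_of_notMem hrDe, Finset.card_erase_of_mem huD]
    have hpos : 0 < D.card := Finset.card_pos.mpr ⟨u, huD⟩
    omega
  have hmemD' : ∀ w, w ∈ D' ↔ (w = r ∨ (w ∈ D ∧ w ≠ u)) := by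
    intro w
    rw [hD'def, Finset.mem_insert, Finset.mem_erase]
    tauto
  have huD' : u ∉ D' := by
    rw [hmemD']
    rintro (rfl | ⟨_, h⟩)
    · exact hrD huD
    · exact h rfl
  -- fact2 on D'
  have fact2' : ∀ a ∈ D', ∀ b ∈ D', b ≠ a → G.Adj a b → (epn G a D').Nonempty := by
    intro a ha b hb hba hab
    exact my_fact2 G hdom' hcard' ha hb (fun h => hba h.symm) hab
  -- r is good in D'
  have hrgood : (epn G r D').Nonempty := by
    by_cases huv : u = v
    · have hdD' : d ∈ D' := (hmemD' d).mpr (Or.inr ⟨hdD, by rw [huv]; exact hdv⟩)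
      exact fact2' r ((hmemD' r).mpr (Or.inl rfl)) d hdD'
        (fun h => (SimpleGraph.Adj.ne hdr) h) hdr.symm
    · have hvD' : v ∈ D' := (hmemD' v).mpr (Or.inr ⟨hv, fun h => huv h.symm⟩)
      exact fact2' r ((hmemD' r).mpr (Or.inl rfl)) v hvD'
        (fun h => (SimpleGraph.Adj.ne hr) h) hr.symm
  -- flips land in X
  have hflip : ∀ w ∈ D, w ≠ u → w ≠ v → epn G w D' = ∅ →
      ∀ t ∈ epn G w D, t ∈ X := by
    intro w hwD hwu hwv hemp t ht
    obtain ⟨htw, hpriv⟩ := (my_mem_epn G).mp ht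
    have htD : t ∉ D := by
      intro htD
      have htw' : t ≠ w := fun he => G.irrefl (he ▸ htw)
      exact (hpriv t (Finset.mem_erase.mpr ⟨htw', htD⟩)).1 rfl
    have htv : t ≠ v := fun he => htD (he ▸ hv)
    have htnot : t ∉ epn G w D' := by rw [hemp]; exact Set.notMem_empty t
    rw [my_mem_epn] at htnot
    push_neg at htnot
    obtain ⟨w', hw', hcond⟩ := htnot htw
    obtain ⟨hw'w, hw'D'⟩ := Finset.mem_erase.mp hw'
    rcases (hmemD' w').mp hw'D' with rfl | ⟨hw'D, hw'u⟩
    · -- w' = r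
      have htr : t ≠ w' := by
        rintro rfl
        -- t = r : but v ∈ D.erase w and Adj v r
        have hvw : v ∈ D.erase w := Finset.mem_erase.mpr ⟨fun h => hwv h.symm, hv⟩
        exact (hpriv v hvw).2 hr
      have hadj : G.Adj w' t := hcond htr
      rw [hXdef]
      refine Finset.mem_sdiff.mpr ⟨?_, ?_⟩
      · rw [SimpleGraph.mem_neighborFinset]; exact hadj
      · intro hmem
        rcases Finset.mem_insert.mp hmem with h | h
        · exact htv h
        · exact htD h
    · -- w' ∈ D, contradiction with privacy
      have hw'e : w' ∈ D.erase w := Finset.mem_erase.mpr ⟨hw'w, hw'D⟩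
      exfalso
      rcases eq_or_ne t w' with h | h
      · exact (hpriv w' hw'e).1 h
      · exact (hpriv w' hw'e).2 (hcond h)
  -- the potential flip set W
  set W : Finset V := D.filter
      (fun w => (epn G w D).Nonempty ∧ ∀ t ∈ epn G w D, t ∈ X) with hWdef
  have hWcard : W.card ≤ 1 := by
    rw [Finset.card_le_one]
    intro a ha b hb
    obtain ⟨haD, ⟨xa, hxa⟩, hsa⟩ := Finset.mem_filter.mp ha
    obtain ⟨hbD, ⟨xb, hxb⟩, hsb⟩ := Finset.mem_filter.mp hb
    have hxax : xa ∈ X := hsa xa hxa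
    have hxbx : xb ∈ X := hsb xb hxb
    have hxab : xa = xb := Finset.card_le_one.mp hXcard xa hxax xb hxbx
    exact my_owner_unique G haD hbD hxa (hxab ▸ hxb)
  -- main inclusion
  have hvbadF : v ∈ badF G D := (my_mem_badF G).mpr ⟨hv, hbad⟩
  have hsubset : badF G D' ⊆ ((badF G D).erase v).erase u ∪ W := by
    intro w hw
    obtain ⟨hwD', hwemp⟩ := (my_mem_badF G).mp hw
    have hwr : w ≠ r := by
      rintro rfl
      rw [hwemp] at hrgood
      exact Set.not_nonempty_empty hrgood
    have hwDu : w ∈ D ∧ w ≠ u := by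
      rcases (hmemD' w).mp hwD' with h | h
      · exact absurd h hwr
      · exact h
    obtain ⟨hwD, hwu⟩ := hwDu
    have hwv : w ≠ v := by
      rintro rfl
      -- then u ≠ w = v, so v ∈ D' and v ~ r ∈ D': good, contradiction
      have hvD' : w ∈ D' := (hmemD' w).mpr (Or.inr ⟨hwD, hwu⟩)
      have hrD' : r ∈ D' := (hmemD' r).mpr (Or.inl rfl)
      have := fact2' w hvD' r hrD' (fun h => (SimpleGraph.Adj.ne hr) h.symm) hr
      rw [hwemp] at this
      exact Set.not_nonempty_empty this
    by_cases hwb : epn G w D = ∅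
    · exact Finset.mem_union_left _ (Finset.mem_erase.mpr ⟨hwu,
        Finset.mem_erase.mpr ⟨hwv, (my_mem_badF G).mpr ⟨hwD, hwb⟩⟩⟩)
    · refine Finset.mem_union_right _ (Finset.mem_filter.mpr ⟨hwD, ?_, ?_⟩)
      · exact Set.nonempty_iff_ne_empty.mpr hwb
      · exact hflip w hwD hwu hwv hwemp
  -- bounds
  have hNiso : (isoF G D').card ≤ Fintype.card V := by
    have hsubiso : isoF G D' ⊆ D' := fun w hw => ((my_mem_isoF G).mp hw).1
    calc (isoF G D').card ≤ D'.card := Finset.card_le_card hsubiso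
      _ ≤ Fintype.card V := Finset.card_le_univ D'
  by_cases huv : u = v
  · -- response u = v : b' ≤ b and iso strictly decreases
    subst huv
    have hb' : (badF G D').card ≤ (badF G D).card := by
      have h1 : (badF G D').card ≤ (((badF G D).erase u).erase u ∪ W).card := by
        apply Finset.card_le_card
        exact hsubset
      have h2 : (((badF G D).erase u).erase u ∪ W).card ≤
          ((badF G D).erase u).card + W.card := by
        rw [Finset.erase_idem]
        exact Finset.card_union_le _ _
      have h3 : ((badF G D).erase u).card = (badF G D).card - 1 :=
        Finset.card_erase_of_mem hvbadF
      have hpos : 0 < (badF G D).card := Finset.card_pos.mpr ⟨u, hvbadF⟩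
      omega
    have hisosub : isoF G D' ⊆ (isoF G D).erase u := by
      intro w hw
      obtain ⟨hwD', hwiso⟩ := (my_mem_isoF G).mp hw
      have hwr : w ≠ r := by
        rintro rfl
        have hdD' : d ∈ D' := (hmemD' d).mpr (Or.inr ⟨hdD, hdv⟩)
        exact hwiso d hdD' hdr.symm
      obtain ⟨hwD, hwu⟩ : w ∈ D ∧ w ≠ u := by
        rcases (hmemD' w).mp hwD' with h | h
        · exact absurd h hwr
        · exact h
      refine Finset.mem_erase.mpr ⟨hwu, (my_mem_isoF G).mpr ⟨hwD, ?_⟩⟩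
      intro y hy
      by_cases hyu : y = u
      · subst hyu
        intro hadj
        exact hnbrD w hwD hadj.symm
      · exact hwiso y ((hmemD' y).mpr (Or.inr ⟨hy, hyu⟩))
    have huiso : u ∈ isoF G D := by
      refine (my_mem_isoF G).mpr ⟨hv, ?_⟩
      intro y hy
      exact hnbrD y hy
    have hiso' : (isoF G D').card < (isoF G D).card := by
      have h1 : (isoF G D').card ≤ ((isoF G D).erase u).card :=
        Finset.card_le_card hisosub
      have h2 : ((isoF G D).erase u).card = (isoF G D).card - 1 :=
        Finset.card_erase_of_mem huiso
      have hpos : 0 < (isoF G D).card := Finset.card_pos.mpr ⟨u, huiso⟩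
      omega
    rw [Phi, Phi]
    have := Nat.mul_le_mul_right (Fintype.card V + 1) hb'
    omega
  · -- response u ≠ v : bad count strictly decreases
    have hvD' : v ∈ D' := (hmemD' v).mpr (Or.inr ⟨hv, fun h => huv h.symm⟩)
    have hb' : (badF G D').card < (badF G D).card := by
      by_cases hub : epn G u D = ∅
      · -- u bad too
        have hubadF : u ∈ badF G D := (my_mem_badF G).mpr ⟨huD, hub⟩
        have hue : u ∈ (badF G D).erase v :=
          Finset.mem_erase.mpr ⟨fun h => huv h, hubadF⟩
        have h1 : (badF G D').card ≤ ((badF G D).erase v).card - 1 + W.card := by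
          have := Finset.card_le_card hsubset
          have h2 := Finset.card_union_le (((badF G D).erase v).erase u) W
          have h3 : (((badF G D).erase v).erase u).card =
              ((badF G D).erase v).card - 1 := Finset.card_erase_of_mem hue
          omega
        have h4 : ((badF G D).erase v).card = (badF G D).card - 1 :=
          Finset.card_erase_of_mem hvbadF
        have h5 : 0 < ((badF G D).erase v).card := Finset.card_pos.mpr ⟨u, hue⟩
        omega
      · -- u good: W can only contain u, which is not in D'
        have hXu : ∀ t ∈ epn G u D, t ∈ X := by
          intro t ht
          obtain ⟨hut, hupriv⟩ := (my_mem_epn G).mp ht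
          have hve : v ∈ D.erase u := Finset.mem_erase.mpr ⟨fun h => huv h.symm, hv⟩
          have htv : t ≠ v := (hupriv v hve).1
          have htD : t ∉ D := by
            intro htD
            have htu : t ≠ u := fun he => G.irrefl (he ▸ hut)
            exact (hupriv t (Finset.mem_erase.mpr ⟨htu, htD⟩)).1 rfl
          have htr : t ≠ r := by
            rintro rfl
            exact (hupriv v hve).2 hr
          have htD' : t ∉ D' := by
            rw [hmemD']
            rintro (rfl | ⟨h, _⟩)
            · exact htr rfl
            · exact htD h
          obtain ⟨s, hsD', hst⟩ := hdom' t htD'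
          rcases (hmemD' s).mp hsD' with rfl | ⟨hsD, hsu⟩
          · rw [hXdef]
            refine Finset.mem_sdiff.mpr ⟨?_, ?_⟩
            · rw [SimpleGraph.mem_neighborFinset]; exact hst
            · intro hmem
              rcases Finset.mem_insert.mp hmem with h | h
              · exact htv h
              · exact htD h
          · exact absurd hst ((hupriv s (Finset.mem_erase.mpr ⟨hsu, hsD⟩)).2)
        have hWu : ∀ w ∈ W, w = u := by
          intro w hw
          obtain ⟨hwD, ⟨xw, hxw⟩, hsw⟩ := Finset.mem_filter.mp hw
          obtain ⟨xu, hxu⟩ := Set.nonempty_iff_ne_empty.mpr hub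
          have h1 : xw ∈ X := hsw xw hxw
          have h2 : xu ∈ X := hXu xu hxu
          have : xw = xu := Finset.card_le_one.mp hXcard xw h1 xu h2
          exact my_owner_unique G hwD huD hxw (this ▸ hxu)
        have hsub2 : badF G D' ⊆ ((badF G D).erase v).erase u := by
          intro w hw
          rcases Finset.mem_union.mp (hsubset hw) with h | h
          · exact h
          · exfalso
            have := hWu w h
            subst this
            exact huD' ((my_mem_badF G).mp hw).1
        have h1 : (badF G D').card ≤ ((badF G D).erase v).card :=
          le_trans (Finset.card_le_card hsub2)
            (Finset.card_le_card (Finset.erase_subset _ _))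
        have h2 : ((badF G D).erase v).card = (badF G D).card - 1 :=
          Finset.card_erase_of_mem hvbadF
        have hpos : 0 < (badF G D).card := Finset.card_pos.mpr ⟨v, hvbadF⟩
        omega
    rw [Phi, Phi]
    have hble : (badF G D').card + 1 ≤ (badF G D).card := hb'
    have := Nat.mul_le_mul_right (Fintype.card V + 1) hble
    have hexp : ((badF G D').card + 1) * (Fintype.card V + 1) =
        (badF G D').card * (Fintype.card V + 1) + (Fintype.card V + 1) := by ring
    omega

end Aux

/-- if `G` has no isolated vertices, `γ(G) = γ^∞(G)`, and `Δ(G) ≤ 3`,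
then `G` has a minimum eternal guard family containing a set `D` with
`epn(v, D) ≠ ∅` for every `v ∈ D`. -/

theorem stmt13 [Fintype V] [DecidableEq V] (G : SimpleGraph V) [DecidableRel G.Adj]
    (hiso : ∀ v : V, 0 < G.degree v)
    (heq : domNum G = eternalDomNum G)
    (hΔ : ∀ v : V, G.degree v ≤ 3) :
    ∃ F : Set (Finset V), IsEternalGuardFamily G (eternalDomNum G) F ∧
      ∃ D ∈ F, ∀ v ∈ D, (epn G v D).Nonempty := by
  classical
  rcases isEmpty_or_nonempty V with hemp | hne
  · -- no vertices at all
    have hset : {k | 1 ≤ k ∧ ∃ F : Set (Finset V), IsEternalGuardFamily G k F} = ∅ := by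
      ext k
      simp only [Set.mem_setOf_eq, Set.mem_empty_iff_false, iff_false, not_and]
      rintro hk1 ⟨F, ⟨D, hDF⟩, hprop, -⟩
      obtain ⟨-, hcard⟩ := hprop D hDF
      have hD0 : D = ∅ := Finset.eq_empty_of_forall_notMem (fun x _ => hemp.false x)
      rw [hD0] at hcard
      simp at hcard
      omega
    have hk0 : eternalDomNum G = 0 := by
      rw [eternalDomNum, hset, Nat.sInf_empty]
    refine ⟨{(∅ : Finset V)}, ?_, ∅, rfl, ?_⟩
    · rw [hk0]
      refine ⟨⟨∅, rfl⟩, ?_, ?_⟩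
      · intro D hD
        rw [Set.mem_singleton_iff] at hD
        subst hD
        exact ⟨fun x _ => (hemp.false x).elim, rfl⟩
      · intro D _ r
        exact (hemp.false r).elim
    · intro x hx
      exact absurd hx (Finset.notMem_empty x)
  · -- there is a vertex
    have hwitness : (Fintype.card V) ∈
        {k | 1 ≤ k ∧ ∃ F : Set (Finset V), IsEternalGuardFamily G k F} := by
      refine ⟨Fintype.card_pos, {Finset.univ}, ⟨Finset.univ, rfl⟩, ?_, ?_⟩
      · intro D hD
        rw [Set.mem_singleton_iff] at hD
        subst hD
        exact ⟨fun x hx => absurd (Finset.mem_univ x) hx, Finset.card_univ⟩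
      · intro D hD r hr
        rw [Set.mem_singleton_iff] at hD
        subst hD
        exact absurd (Finset.mem_univ r) hr
    have hk := Nat.sInf_mem (⟨_, hwitness⟩ :
      {k | 1 ≤ k ∧ ∃ F : Set (Finset V), IsEternalGuardFamily G k F}.Nonempty)
    obtain ⟨hk1, F, hF⟩ := hk
    obtain ⟨hFne, hFmem, hFdef⟩ := hF
    obtain ⟨D, hDF, hDmin⟩ : ∃ D ∈ F, ∀ E ∈ F, Phi G D ≤ Phi G E := by
      have hMne : {n | ∃ D ∈ F, Phi G D = n}.Nonempty :=
        ⟨Phi G hFne.choose, hFne.choose, hFne.choose_spec, rfl⟩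
      obtain ⟨D, hDF, hPhi⟩ := Nat.sInf_mem hMne
      refine ⟨D, hDF, fun E hE => ?_⟩
      rw [hPhi]
      exact Nat.sInf_le ⟨E, hE, rfl⟩
    by_cases hgood : ∀ v ∈ D, (epn G v D).Nonempty
    · exact ⟨F, ⟨hFne, hFmem, hFdef⟩, D, hDF, hgood⟩
    · exfalso
      push_neg at hgood
      obtain ⟨v, hvD, hvne⟩ := hgood
      have hbad : epn G v D = ∅ := hvne
      obtain ⟨hDdom, hDcard⟩ := hFmem D hDF
      have hc : D.card = domNum G := by rw [hDcard, heq, eternalDomNum]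
      obtain ⟨r, hr⟩ : ∃ r, G.Adj v r := by
        have hdeg := hiso v
        rw [← SimpleGraph.card_neighborFinset_eq_degree] at hdeg
        obtain ⟨r, hrmem⟩ := Finset.card_pos.mp hdeg
        exact ⟨r, by simpa [SimpleGraph.mem_neighborFinset] using hrmem⟩
      obtain ⟨hrD, hcore⟩ := my_core G hΔ hDdom hc hvD hbad hr
      obtain ⟨u, huD, hur, hresp⟩ := hFdef D hDF r hrD
      have hrespdom : Dominates G (insert r (D.erase u)) := (hFmem _ hresp).1
      have hlt := hcore u huD hur hrespdom
      have hge := hDmin _ hresp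
      omega
end

section
/- Let G be a finite triangle-free simple graph without isolated vertices such that γ^∞(G) = γ(G). Then there exists an eternal guard family F of size γ^∞(G) in G and a set D ∈ F such that the external private neighborhood epn(v,D) is nonempty for every v ∈ D. -/
variable {V : Type*}

open Classical in
/-- The set of vertices of `D` having no neighbour inside `D`. -/
noncomputable def isoSet [DecidableEq V] (G : SimpleGraph V) (D : Finset V) : Finset V :=
  D.filter (fun y => ∀ w ∈ D.erase y, ¬ G.Adj y w)

lemma mem_isoSet [DecidableEq V] {G : SimpleGraph V} {D : Finset V} {y : V} :
    y ∈ isoSet G D ↔ y ∈ D ∧ ∀ w ∈ D.erase y, ¬ G.Adj y w := by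
  classical
  simp [isoSet]

/-- if `G` is triangle-free without isolated vertices and
`γ^∞(G) = γ(G)`, then `G` has a minimum eternal guard family containing a set `D`
with `epn(v, D) ≠ ∅` for every `v ∈ D`. -/
theorem stmt16 [Fintype V] [DecidableEq V] (G : SimpleGraph V)
    (htf : G.CliqueFree 3)
    (hiso : ∀ v : V, ∃ u, G.Adj u v)
    (heq : eternalDomNum G = domNum G) :
    ∃ F : Set (Finset V), IsEternalGuardFamily G (eternalDomNum G) F ∧
      ∃ D ∈ F, ∀ v ∈ D, (epn G v D).Nonempty := by
  classical
  by_cases hV : Nonempty V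
  · -- V nonempty
    have hmemset : Fintype.card V ∈
        {k | 1 ≤ k ∧ ∃ F : Set (Finset V), IsEternalGuardFamily G k F} := by
      refine ⟨Fintype.card_pos, {Finset.univ}, Set.singleton_nonempty _, ?_, ?_⟩
      · rintro D hD
        rw [Set.mem_singleton_iff] at hD; subst hD
        exact ⟨fun v hv => absurd (Finset.mem_univ v) hv, Finset.card_univ⟩
      · intro D hD r hr
        rw [Set.mem_singleton_iff] at hD; subst hD
        exact absurd (Finset.mem_univ r) hr
    have hkmem : 1 ≤ eternalDomNum G ∧
        ∃ F : Set (Finset V), IsEternalGuardFamily G (eternalDomNum G) F :=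
      Nat.sInf_mem (⟨_, hmemset⟩ :
        {k | 1 ≤ k ∧ ∃ F : Set (Finset V), IsEternalGuardFamily G k F}.Nonempty)
    obtain ⟨hk1, F, hF⟩ := hkmem
    have hmin : ∀ E : Finset V, Dominates G E → domNum G ≤ E.card :=
      fun E hE => Nat.sInf_le ⟨E, hE, rfl⟩
    -- choose D ∈ F minimizing the number of isolated vertices
    obtain ⟨D0, hD0⟩ := hF.1
    obtain ⟨D, hDF, hDmin⟩ :
        ∃ D ∈ F, ∀ D' ∈ F, (isoSet G D).card ≤ (isoSet G D').card := by
      obtain ⟨D, hDF, hcard⟩ := Nat.sInf_mem (⟨_, D0, hD0, rfl⟩ :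
        {n | ∃ D ∈ F, (isoSet G D).card = n}.Nonempty)
      refine ⟨D, hDF, fun D' hD' => ?_⟩
      rw [hcard]
      exact Nat.sInf_le ⟨D', hD', rfl⟩
    refine ⟨F, hF, D, hDF, ?_⟩
    intro v hv
    by_contra hbadv
    have hbad : ∀ z : V, ¬ (G.Adj v z ∧ ∀ w ∈ D.erase v, z ≠ w ∧ ¬ G.Adj w z) :=
      fun z hz => hbadv ⟨z, hz⟩
    -- any vertex of D with empty external private neighbourhood is isolated in D
    have isoOfBad : ∀ x ∈ D,
        (∀ z : V, ¬ (G.Adj x z ∧ ∀ w ∈ D.erase x, z ≠ w ∧ ¬ G.Adj w z)) →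
        ∀ w ∈ D.erase x, ¬ G.Adj x w := by
      intro x hx hbadx
      have hnd : ¬ Dominates G (D.erase x) := by
        intro hdome
        have h1 := hmin _ hdome
        rw [Finset.card_erase_of_mem hx] at h1
        have hcard : D.card = eternalDomNum G := (hF.2.1 D hDF).2
        omega
      simp only [Dominates] at hnd
      push_neg at hnd
      obtain ⟨z, hz1, hz2⟩ := hnd
      by_cases hzx : z = x
      · subst hzx
        intro w hw hadj
        exact hz2 w hw hadj.symm
      · have hzD : z ∉ D := by
          intro h
          exact hz1 (Finset.mem_erase.mpr ⟨hzx, h⟩)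
        obtain ⟨u, huD, huz⟩ := (hF.2.1 D hDF).1 z hzD
        have hux : u = x := by
          by_contra h
          exact hz2 u (Finset.mem_erase.mpr ⟨h, huD⟩) huz
        subst hux
        exfalso
        refine hbadx z ⟨huz, ?_⟩
        intro w hw
        refine ⟨?_, fun h => hz2 w hw h⟩
        intro h; subst h
        exact hz1 hw
    have hvIso : ∀ w ∈ D.erase v, ¬ G.Adj v w := isoOfBad v hv hbad
    -- v has a neighbour u, necessarily outside D
    obtain ⟨u, hu⟩ := hiso v
    have huD : u ∉ D := by
      intro h
      exact hvIso u (Finset.mem_erase.mpr ⟨hu.ne, h⟩) hu.symm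
    -- u has a dominator in D.erase v
    have hexw : ∃ w ∈ D.erase v, G.Adj w u := by
      have h := hbad u
      push_neg at h
      obtain ⟨w, hwmem, hwp⟩ := h hu.symm
      refine ⟨w, hwmem, hwp ?_⟩
      intro h2
      exact huD (h2 ▸ (Finset.mem_erase.mp hwmem).2)
    -- attack u
    obtain ⟨x, hxD, hxu, hD'⟩ := hF.2.2 D hDF u huD
    set D' : Finset V := insert u (D.erase x) with hD'def
    -- the moving guard x is isolated in D
    have hxIso : ∀ w ∈ D.erase x, ¬ G.Adj x w := by
      by_cases hxv : x = v
      · subst hxv; exact hvIso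
      · apply isoOfBad x hxD
        rintro z ⟨hzx, hzpriv⟩
        have hvx : v ∈ D.erase x := Finset.mem_erase.mpr ⟨fun h => hxv h.symm, hv⟩
        have hzu : z ≠ u := by
          rintro rfl
          exact (hzpriv v hvx).2 hu.symm
        have hzD' : z ∉ D' := by
          intro hmem
          rcases Finset.mem_insert.mp hmem with h | h
          · exact hzu h
          · exact (hzpriv z h).1 rfl
        obtain ⟨y, hyD', hyz⟩ := (hF.2.1 D' hD').1 z hzD'
        rcases Finset.mem_insert.mp hyD' with rfl | hy
        · -- triangle x z y(=u)
          exact htf {x, y, z} (SimpleGraph.is3Clique_triple_iff.mpr ⟨hxu, hzx, hyz⟩)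
        · exact (hzpriv y hy).2 hyz
    -- the isolated set strictly decreases, contradiction with minimality
    have hsub : isoSet G D' ⊆ (isoSet G D).erase x := by
      intro y hy
      rw [mem_isoSet] at hy
      obtain ⟨hyD', hyiso⟩ := hy
      rcases Finset.mem_insert.mp hyD' with rfl | hyD
      · exfalso
        by_cases hxv : x = v
        · subst hxv
          obtain ⟨w, hwm, hwu⟩ := hexw
          have hwy : w ≠ y := fun h => huD (h ▸ (Finset.mem_erase.mp hwm).2)
          have hwD' : w ∈ D'.erase y :=
            Finset.mem_erase.mpr ⟨hwy, Finset.mem_insert.mpr (Or.inr hwm)⟩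
          exact hyiso w hwD' hwu.symm
        · have hvy : v ≠ y := fun h => huD (h ▸ hv)
          have hvD' : v ∈ D'.erase y :=
            Finset.mem_erase.mpr ⟨hvy, Finset.mem_insert.mpr
              (Or.inr (Finset.mem_erase.mpr ⟨fun h => hxv h.symm, hv⟩))⟩
          exact hyiso v hvD' hu
      · have hyx : y ≠ x := (Finset.mem_erase.mp hyD).1
        refine Finset.mem_erase.mpr ⟨hyx, mem_isoSet.mpr ⟨(Finset.mem_erase.mp hyD).2, ?_⟩⟩
        intro w hw
        rcases eq_or_ne w x with rfl | hwx
        · intro hadj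
          exact hxIso y hyD hadj.symm
        · have hwD : w ∈ D.erase y := hw
          have hwyu : w ≠ u := fun h => huD (h ▸ (Finset.mem_erase.mp hwD).2)
          apply hyiso w
          exact Finset.mem_erase.mpr ⟨(Finset.mem_erase.mp hwD).1,
            Finset.mem_insert.mpr (Or.inr (Finset.mem_erase.mpr
              ⟨hwx, (Finset.mem_erase.mp hwD).2⟩))⟩
    have hxiso' : x ∈ isoSet G D := mem_isoSet.mpr ⟨hxD, hxIso⟩
    have hlt : (isoSet G D').card < (isoSet G D).card :=
      lt_of_le_of_lt (Finset.card_le_card hsub) (Finset.card_erase_lt_of_mem hxiso')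
    exact absurd (hDmin D' hD') (not_le.mpr hlt)
  · -- V empty
    have hE : IsEmpty V := not_nonempty_iff.mp hV
    have h0 : eternalDomNum G = 0 := by
      have hempty : {k | 1 ≤ k ∧ ∃ F : Set (Finset V), IsEternalGuardFamily G k F} = ∅ := by
        ext k
        simp only [Set.mem_setOf_eq, Set.mem_empty_iff_false, iff_false, not_and]
        rintro hk1 ⟨F, hFne, hdom, -⟩
        obtain ⟨D, hD⟩ := hFne
        have hDe : D = ∅ := Finset.eq_empty_of_isEmpty D
        have := (hdom D hD).2
        rw [hDe, Finset.card_empty] at this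
        omega
      rw [eternalDomNum, hempty, Nat.sInf_empty]
    refine ⟨{∅}, ?_, ∅, Set.mem_singleton _, by simp⟩
    rw [h0]
    refine ⟨Set.singleton_nonempty _, ?_, ?_⟩
    · rintro D hD
      rw [Set.mem_singleton_iff] at hD; subst hD
      exact ⟨fun v _ => isEmptyElim v, Finset.card_empty⟩
    · intro D _ r
      exact isEmptyElim r
end
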